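/- Soundness of ≅: let (W, ▷) be a well-founded frame and fix a syntactical λ-algebra (V, ·, ⟦ ⟧). If A ≅ B, then I(A)^η_p = I(B)^η_p for every hereditary type environment η and every world p ∈ W. -/

import Mathlib

namespace LambdaA

/-! ### Type expressions (de Bruijn representation for `μ`-binders) -/

inductive Ty : Type
  | var : ℕ → Ty
  | arrow : Ty → Ty → Ty
  | box : Ty → Ty
  | mu : Ty → Ty
  deriving DecidableEq

namespace Ty

def rename : (ℕ → ℕ) → Ty → Ty
  | f, var n => var (f n)
  | f, arrow A B => arrow (rename f A) (rename f B)
  | f, box A => box (rename f A)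
  | f, mu A => mu (rename (fun n => match n with | 0 => 0 | Nat.succ m => f m + 1) A)

def shiftUp : Ty → Ty := rename Nat.succ

def subst : (ℕ → Ty) → Ty → Ty
  | σ, var n => σ n
  | σ, arrow A B => arrow (subst σ A) (subst σ B)
  | σ, box A => box (subst σ A)
  | σ, mu A => mu (subst (fun n => match n with | 0 => var 0 | Nat.succ m => shiftUp (σ m)) A)

end Ty

/-- `openT A B`: instantiate the outermost bound variable (index `0`) of the body `A` by `B`. -/
def openT (A B : Ty) : Ty :=
  Ty.subst (fun n => match n with | 0 => B | Nat.succ m => Ty.var m) A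

/-- `substFree A X B` is the capture-avoiding substitution `A[B/X]` for the free variable `X`. -/
def substFree (A : Ty) (X : ℕ) (B : Ty) : Ty :=
  Ty.subst (fun n => if n = X then B else Ty.var n) A

/-- The unfolding `μX.A ↦ A[μX.A/X]` of a recursive type. -/
def unfoldMu (A : Ty) : Ty := openT A (Ty.mu A)

/-- Free occurrence of a type variable in a type expression. -/
def freeInTy : ℕ → Ty → Prop
  | X, .var n => n = X
  | X, .arrow A B => freeInTy X A ∨ freeInTy X B
  | X, .box A => freeInTy X A
  | X, .mu A => freeInTy (X + 1) A

/-- Auxiliary ⊤-variant test.  `tvAux A d t` scans the tail of `A`, where `d` is the number of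
`μ`-binders passed so far and `t` is the number of (outermost) such binders inside which a `•`
has already been encountered.  A variable qualifies iff it is bound by one of the `μ`-binders
and at least one `•` occurs inside that binder. -/
def tvAux : Ty → ℕ → ℕ → Bool
  | .var j, d, t => decide (d - t ≤ j ∧ j < d)
  | .box A, d, _ => tvAux A d d
  | .mu A, d, t => tvAux A (d + 1) t
  | .arrow _ B, d, t => tvAux B d t

/-- `A` is a ⊤-variant. -/
def IsTV (A : Ty) : Prop := tvAux A 0 0 = true

/-- `Proper A X` : the type expression `A` is proper in the (free) variable `X`. -/
def Proper : Ty → ℕ → Prop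
  | .var n, X => n ≠ X
  | .box _, _ => True
  | .arrow A B, X => (Proper A X ∧ Proper B X) ∨ IsTV B
  | .mu A, X => Proper A (X + 1) ∨ IsTV (.mu A)

/-- Well-formed type expressions: every recursive type `μX.A` has `A` proper in `X`. -/
def WF : Ty → Prop
  | .var _ => True
  | .arrow A B => WF A ∧ WF B
  | .box A => WF A
  | .mu A => WF A ∧ Proper A 0

/-- `⊤ = μX.•X`. -/
def tyTop : Ty := .mu (.box (.var 0))

/-- `•ⁿ A`. -/
def boxN (n : ℕ) (A : Ty) : Ty := Ty.box^[n] A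

/-- The equivalences `≅` (`s = false`) and `≃` (`s = true`) on type expressions. -/
inductive TyEq : Bool → Ty → Ty → Prop
  | refl (s : Bool) (A : Ty) : TyEq s A A
  | symm {s : Bool} {A B : Ty} : TyEq s A B → TyEq s B A
  | trans {s : Bool} {A B C : Ty} : TyEq s A B → TyEq s B C → TyEq s A C
  | boxCongr {s : Bool} {A B : Ty} : TyEq s A B → TyEq s (.box A) (.box B)
  | arrowCongr {s : Bool} {A B C D : Ty} :
      TyEq s A C → TyEq s B D → TyEq s (.arrow A B) (.arrow C D)
  | arrowTop (s : Bool) (A : Ty) : TyEq s (.arrow A tyTop) tyTop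
  | fix (s : Bool) (A : Ty) : TyEq s (.mu A) (unfoldMu A)
  | uniq {s : Bool} {A C : Ty} : TyEq s A (openT C A) → Proper C 0 → TyEq s A (.mu C)
  | kl (A B : Ty) : TyEq true (.box (.arrow A B)) (.arrow (.box A) (.box B))

/-! ### Subtyping -/

/-- Subtyping assumptions: finite sets of pairs of type variables. -/
abbrev Assum := Finset (ℕ × ℕ)

/-- Well-formedness of a subtyping assumption: every type variable occurs at most once. -/
def AssumOK (γ : Assum) : Prop :=
  (∀ p ∈ γ, (p : ℕ × ℕ).1 ≠ p.2) ∧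
    ∀ p ∈ γ, ∀ q ∈ γ, p ≠ q →
      (p : ℕ × ℕ).1 ≠ (q : ℕ × ℕ).1 ∧ p.1 ≠ q.2 ∧ p.2 ≠ q.1 ∧ p.2 ≠ q.2

/-- `X` occurs in the subtyping assumption `γ`. -/
def AssumVar (γ : Assum) (X : ℕ) : Prop :=
  ∃ p ∈ γ, (p : ℕ × ℕ).1 = X ∨ (p : ℕ × ℕ).2 = X

/-- Derivability of subtyping judgments `γ ⊢ A ⪯ B`. -/
inductive Sub : Assum → Ty → Ty → Prop
  | assump {γ : Assum} {X Y : ℕ} : AssumOK γ → (X, Y) ∈ γ → Sub γ (.var X) (.var Y)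
  | top {γ : Assum} (A : Ty) : AssumOK γ → Sub γ A tyTop
  | refl {γ : Assum} {A B : Ty} : AssumOK γ → TyEq true A B → Sub γ A B
  | trans {γ₁ γ₂ : Assum} {A B C : Ty} :
      Sub γ₁ A B → Sub γ₂ B C → AssumOK (γ₁ ∪ γ₂) → Sub (γ₁ ∪ γ₂) A C
  | boxMono {γ : Assum} {A B : Ty} : Sub γ A B → Sub γ (.box A) (.box B)
  | arrowMono {γ₁ γ₂ : Assum} {A A' B B' : Ty} :
      Sub γ₁ A' A → Sub γ₂ B B' → AssumOK (γ₁ ∪ γ₂) →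
      Sub (γ₁ ∪ γ₂) (.arrow A B) (.arrow A' B')
  | muMono {γ : Assum} {X Y : ℕ} {A B : Ty} :
      AssumOK (insert (X, Y) γ) →
      Sub (insert (X, Y) γ) (openT A (.var X)) (openT B (.var Y)) →
      ¬ AssumVar γ X → ¬ AssumVar γ Y →
      ¬ freeInTy X (openT B (.var Y)) → ¬ freeInTy Y (openT A (.var X)) →
      Proper (openT A (.var X)) X → Proper (openT B (.var Y)) Y →
      Sub γ (.mu A) (.mu B)
  | approx {γ : Assum} (A : Ty) : AssumOK γ → Sub γ A (.box A)

/-! ### Untyped λ-terms (locally-nameless representation) -/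

inductive Tm : Type
  | bvar : ℕ → Tm
  | fvar : ℕ → Tm
  | lam : Tm → Tm
  | app : Tm → Tm → Tm
  deriving DecidableEq

def openTmAux (N : Tm) : ℕ → Tm → Tm
  | _, .fvar y => .fvar y
  | k, .bvar i => if i = k then N else .bvar i
  | k, .lam M => .lam (openTmAux N (k + 1) M)
  | k, .app M₁ M₂ => .app (openTmAux N k M₁) (openTmAux N k M₂)

/-- Instantiate the outermost bound variable of the body `M` by `N`. -/
def openTm (M N : Tm) : Tm := openTmAux N 0 M

/-- `substTm M x N` is the substitution `M[N/x]` for the free variable `x`. -/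
def substTm : Tm → ℕ → Tm → Tm
  | .bvar i, _, _ => .bvar i
  | .fvar y, x, N => if y = x then N else .fvar y
  | .lam M, x, N => .lam (substTm M x N)
  | .app M₁ M₂, x, N => .app (substTm M₁ x N) (substTm M₂ x N)

/-- Free occurrence of an individual variable in a λ-term. -/
def freeTm : ℕ → Tm → Prop
  | _, .bvar _ => False
  | x, .fvar y => y = x
  | x, .lam M => freeTm x M
  | x, .app M₁ M₂ => freeTm x M₁ ∨ freeTm x M₂

/-- One-step β-reduction. -/
inductive Step : Tm → Tm → Prop
  | beta (M N : Tm) : Step (.app (.lam M) N) (openTm M N)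
  | appL {M M' : Tm} (N : Tm) : Step M M' → Step (.app M N) (.app M' N)
  | appR (M : Tm) {N N' : Tm} : Step N N' → Step (.app M N) (.app M N')
  | lamCongr {M M' : Tm} : Step M M' → Step (.lam M) (.lam M')

/-- `→*β`, the reflexive-transitive closure of β-reduction. -/
def Steps : Tm → Tm → Prop := Relation.ReflTransGen Step

/-- β-convertibility `=β`. -/
inductive BetaEq : Tm → Tm → Prop
  | step {M N : Tm} : Step M N → BetaEq M N
  | refl (M : Tm) : BetaEq M M
  | symm {M N : Tm} : BetaEq M N → BetaEq N M
  | trans {M N K : Tm} : BetaEq M N → BetaEq N K → BetaEq M K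

/-! ### Typing -/

/-- Typing contexts: finite sets of (variable, type) pairs. -/
abbrev Ctx := Finset (ℕ × Ty)

/-- Well-formedness of a typing context (functionality). -/
def CtxOK (Γ : Ctx) : Prop :=
  ∀ p ∈ Γ, ∀ q ∈ Γ, (p : ℕ × Ty).1 = (q : ℕ × Ty).1 → p = q

/-- `•Γ`. -/
def boxCtx (Γ : Ctx) : Ctx := Γ.image fun p => (p.1, Ty.box p.2)

/-- All types in the context are well-formed type expressions. -/
def CtxWF (Γ : Ctx) : Prop := ∀ p ∈ Γ, WF (p : ℕ × Ty).2

/-- The typing system λA. -/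
inductive Typing : Ctx → Tm → Ty → Prop
  | var {Γ : Ctx} {x : ℕ} {A : Ty} : CtxOK Γ → (x, A) ∈ Γ → Typing Γ (.fvar x) A
  | shift {Γ : Ctx} {M : Tm} {A : Ty} : Typing (boxCtx Γ) M (.box A) → Typing Γ M A
  | top {Γ : Ctx} (M : Tm) : CtxOK Γ → Typing Γ M tyTop
  | sub {Γ : Ctx} {M : Tm} {A B : Ty} : Typing Γ M A → Sub ∅ A B → Typing Γ M B
  | lamI {Γ : Ctx} {x : ℕ} {A B : Ty} {M : Tm} :
      ¬ freeTm x M →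
      Typing (insert (x, A) Γ) (openTm M (.fvar x)) B →
      Typing Γ (.lam M) (.arrow A B)
  | appE {Γ₁ Γ₂ : Ctx} {M N : Tm} {A B : Ty} :
      Typing Γ₁ M (.arrow A B) → Typing Γ₂ N A → CtxOK (Γ₁ ∪ Γ₂) →
      Typing (Γ₁ ∪ Γ₂) (.app M N) B

/-! ### Frames, λ-algebras and the semantics of types -/

/-- The accessibility relation is conversely well-founded. -/
def ConverselyWF {W : Type*} (acc : W → W → Prop) : Prop :=
  WellFounded fun q p => acc p q

/-- Local linearity of the accessibility relation. -/
def LocallyLinear {W : Type*} (acc : W → W → Prop) : Prop :=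
  ∀ p q, acc p q → ∃ r, Relation.ReflTransGen acc p r ∧ acc r q ∧
    ∀ s, acc r s → Relation.ReflTransGen acc q s

/-- Hereditary type environments. -/
def Hereditary {W : Type*} {V : Type*} (acc : W → W → Prop) (η : ℕ → W → Set V) : Prop :=
  ∀ X p q, acc p q → η X p ⊆ η X q

/-- Syntactical λ-algebras of the untyped λ-calculus. -/
structure LambdaAlgebra (V : Type*) where
  nonempty : Nonempty V
  ap : V → V → V
  den : Tm → (ℕ → V) → V
  den_fvar : ∀ x ρ, den (.fvar x) ρ = ρ x
  den_app : ∀ M N ρ, den (.app M N) ρ = ap (den M ρ) (den N ρ)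
  den_lam : ∀ M x ρ v, ¬ freeTm x M →
    ap (den (.lam M) ρ) v = den (openTm M (.fvar x)) (Function.update ρ x v)
  den_ext : ∀ M ρ ρ', (∀ x, freeTm x M → ρ x = ρ' x) → den M ρ = den M ρ'
  den_beta : ∀ M N ρ, BetaEq M N → den M ρ = den N ρ

/-- The interpretation `I(A)^η_p` of type expressions over a frame, packaged together with
its defining (recursion) equations. -/
structure Interp (W : Type*) (acc : W → W → Prop) (V : Type*) (ap : V → V → V) where
  I : Ty → (ℕ → W → Set V) → W → Set V
  I_tv : ∀ A η p, WF A → IsTV A → I A η p = Set.univ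
  I_var : ∀ X η p, I (.var X) η p = η X p
  I_box : ∀ A η p, WF A → ¬ IsTV (Ty.box A) →
    I (.box A) η p = {u | ∀ q, acc p q → u ∈ I A η q}
  I_arrow : ∀ A B η p, WF A → WF B → ¬ IsTV (Ty.arrow A B) →
    I (.arrow A B) η p =
      {u | ∀ q, Relation.ReflTransGen acc p q → ∀ v ∈ I A η q, ap u v ∈ I B η q}
  I_mu : ∀ A η p, WF (Ty.mu A) → ¬ IsTV (Ty.mu A) →
    I (.mu A) η p = I (unfoldMu A) η p

/-! ### Tail finiteness and related notions -/

/-- The sets `TF^V`. -/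
inductive TFmem : Set ℕ → Ty → Prop
  | var {V : Set ℕ} {X : ℕ} : X ∉ V → TFmem V (.var X)
  | box {V : Set ℕ} {A : Ty} : TFmem V A → TFmem V (.box A)
  | arrow {V : Set ℕ} (A : Ty) {B : Ty} : TFmem V B → TFmem V (.arrow A B)
  | mu {V : Set ℕ} {A : Ty} : WF (.mu A) → TFmem ({0} ∪ (Nat.succ '' V)) A → TFmem V (.mu A)

/-- Shapes `•^{m₀}(B₁ → •^{m₁}(B₂ → ⋯ → •^{m_{n-1}}(Bₙ → •^{mₙ} X)⋯))`. -/
inductive TFShape : Ty → Prop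
  | var (X : ℕ) : TFShape (.var X)
  | box {A : Ty} : TFShape A → TFShape (.box A)
  | arrow (A : Ty) {B : Ty} : TFShape B → TFShape (.arrow A B)

/-- Tail finite type expressions. -/
def TailFinite (A : Ty) : Prop := ∃ C, TFShape C ∧ WF C ∧ TyEq false A C

-- Effectively occurring type variables, positively (`petv`) and negatively (`netv`).
mutual
  def petv : Ty → Finset ℕ
    | .var X => {X}
    | .box A => if tvAux (.box A) 0 0 then ∅ else petv A
    | .arrow A B => if tvAux (.arrow A B) 0 0 then ∅ else netv A ∪ petv B
    | .mu A =>
        if tvAux (.mu A) 0 0 then ∅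
        else if 0 ∈ netv A then ((petv A ∪ netv A).erase 0).image (· - 1)
        else ((petv A).erase 0).image (· - 1)
  def netv : Ty → Finset ℕ
    | .var _ => ∅
    | .box A => if tvAux (.box A) 0 0 then ∅ else netv A
    | .arrow A B => if tvAux (.arrow A B) 0 0 then ∅ else petv A ∪ netv B
    | .mu A =>
        if tvAux (.mu A) 0 0 then ∅
        else if 0 ∈ netv A then ((netv A ∪ petv A).erase 0).image (· - 1)
        else ((netv A).erase 0).image (· - 1)
end

/-- Positively finite type expressions. -/
def PosFin (A : Ty) : Prop :=
  ∀ (s : Bool) (B C : Ty) (X : ℕ), WF B → WF C →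
    TyEq s A (substFree B X C) → X ∈ petv B → X ∉ netv B → TailFinite C

/-- Negatively finite type expressions. -/
def NegFin (A : Ty) : Prop :=
  ∀ (s : Bool) (B C : Ty) (X : ℕ), WF B → WF C →
    TyEq s A (substFree B X C) → X ∈ netv B → X ∉ petv B → TailFinite C

/-! ### Head normal forms, maximality, normal forms -/

/-- `y N₁ … Nₙ` with every argument satisfying `P`. -/
inductive SpineArgs (P : Tm → Prop) : Tm → Prop
  | fvar (x : ℕ) : SpineArgs P (.fvar x)
  | bvar (i : ℕ) : SpineArgs P (.bvar i)
  | app {M N : Tm} : SpineArgs P M → P N → SpineArgs P (.app M N)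

/-- Head normal forms `λx₁…λxₘ. y N₁ … Nₙ` whose arguments satisfy `P`. -/
inductive HNFP (P : Tm → Prop) : Tm → Prop
  | spine {M : Tm} : SpineArgs P M → HNFP P M
  | lam {M : Tm} : HNFP P M → HNFP P (.lam M)

/-- Head normal forms. -/
def HNF : Tm → Prop := HNFP fun _ => True

/-- Maximality at a given depth. -/
def MaxAt : ℕ → Tm → Prop
  | 0, _ => True
  | n + 1, M => ∃ M', Steps M M' ∧ HNFP (MaxAt n) M'

/-- Maximal λ-terms: the Böhm tree contains no `⊥`. -/
def Maximal (M : Tm) : Prop := ∀ n, MaxAt n M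

/-- β-normal forms. -/
def NormalForm (M : Tm) : Prop := ∀ N, ¬ Step M N

/-- Type expressions without any occurrence of the modal operator `•`. -/
def NoBox : Ty → Prop
  | .var _ => True
  | .arrow A B => NoBox A ∧ NoBox B
  | .box _ => False
  | .mu A => NoBox A

/-! ### The modal logic LAμ and its Kripke semantics -/

/-- The logic LAμ (formulae are type expressions). -/
inductive LAmu : Finset Ty → Ty → Prop
  | assump {Γ : Finset Ty} {A : Ty} : LAmu (insert A Γ) A
  | nec {Γ₁ : Finset Ty} (Γ₂ : Finset Ty) {A : Ty} :
      LAmu Γ₁ A → LAmu (Γ₁.image Ty.box ∪ Γ₂) (.box A)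
  | four {Γ : Finset Ty} {A : Ty} : LAmu Γ (.box A) → LAmu Γ (.box (.box A))
  | impI {Γ : Finset Ty} {A B : Ty} : LAmu (insert A Γ) B → LAmu Γ (.arrow A B)
  | impE {Γ₁ Γ₂ : Finset Ty} {A B : Ty} :
      LAmu Γ₁ (.arrow A B) → LAmu Γ₂ A → LAmu (Γ₁ ∪ Γ₂) B
  | fold {Γ : Finset Ty} {A : Ty} : LAmu Γ (unfoldMu A) → LAmu Γ (.mu A)
  | unfold {Γ : Finset Ty} {A : Ty} : LAmu Γ (.mu A) → LAmu Γ (unfoldMu A)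
  | lrule {Γ : Finset Ty} {A B : Ty} :
      LAmu Γ (.arrow (.box A) (.box B)) → LAmu Γ (.box (.arrow A B))
  | approx {Γ : Finset Ty} {A : Ty} : LAmu Γ A → LAmu Γ (.box A)

/-- The Kripke satisfaction relation over an LA-frame `(W, tri, R)` under a valuation `ξ`,
packaged with its defining (recursion) equations. -/
structure SatFun {W : Type*} (tri R : W → W → Prop) (ξ : ℕ → W → Prop) where
  sat : Ty → W → Prop
  sat_tv : ∀ A p, WF A → IsTV A → sat A p
  sat_var : ∀ X p, sat (.var X) p ↔ ξ X p
  sat_box : ∀ A p, WF A → ¬ IsTV (Ty.box A) →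
    (sat (.box A) p ↔ ∀ q, tri p q → sat A q)
  sat_arrow : ∀ A B p, WF A → WF B → ¬ IsTV (Ty.arrow A B) →
    (sat (.arrow A B) p ↔ ∀ q, R p q → sat A q → sat B q)
  sat_mu : ∀ A p, WF (Ty.mu A) → ¬ IsTV (Ty.mu A) →
    (sat (.mu A) p ↔ sat (unfoldMu A) p)


/-! ### Infrastructure: renaming and substitution lemmas -/

namespace Ty

def liftF (f : ℕ → ℕ) : ℕ → ℕ := fun n => match n with | 0 => 0 | Nat.succ m => f m + 1

def upS (σ : ℕ → Ty) : ℕ → Ty := fun n => match n with | 0 => var 0 | Nat.succ m => shiftUp (σ m)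

lemma rename_mu (f : ℕ → ℕ) (A : Ty) : rename f (mu A) = mu (rename (liftF f) A) := rfl

lemma subst_mu (σ : ℕ → Ty) (A : Ty) : subst σ (mu A) = mu (subst (upS σ) A) := rfl

lemma rename_congr : ∀ (A : Ty) (f g : ℕ → ℕ), (∀ n, f n = g n) → rename f A = rename g A := by
  intro A
  induction A with
  | var n => intro f g h; simp [rename, h]
  | arrow A B ihA ihB => intro f g h; simp [rename, ihA _ _ h, ihB _ _ h]
  | box A ih => intro f g h; simp [rename, ih _ _ h]
  | mu A ih =>
      intro f g h
      show mu (rename (liftF f) A) = mu (rename (liftF g) A)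
      exact congrArg mu (ih _ _ (fun n => by cases n <;> simp [liftF, h]))

lemma subst_congr : ∀ (A : Ty) (σ τ : ℕ → Ty), (∀ n, σ n = τ n) → subst σ A = subst τ A := by
  intro A
  induction A with
  | var n => intro σ τ h; simp [subst, h]
  | arrow A B ihA ihB => intro σ τ h; simp [subst, ihA _ _ h, ihB _ _ h]
  | box A ih => intro σ τ h; simp [subst, ih _ _ h]
  | mu A ih =>
      intro σ τ h
      show mu (subst (upS σ) A) = mu (subst (upS τ) A)
      exact congrArg mu (ih _ _ (fun n => by cases n <;> simp [upS, h]))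

lemma rename_rename : ∀ (A : Ty) (f g h : ℕ → ℕ), (∀ n, f (g n) = h n) →
    rename f (rename g A) = rename h A := by
  intro A
  induction A with
  | var n => intro f g h hh; simp [rename, hh]
  | arrow A B ihA ihB => intro f g h hh; simp [rename, ihA _ _ _ hh, ihB _ _ _ hh]
  | box A ih => intro f g h hh; simp [rename, ih _ _ _ hh]
  | mu A ih =>
      intro f g h hh
      show mu (rename (liftF f) (rename (liftF g) A)) = mu (rename (liftF h) A)
      exact congrArg mu (ih _ _ _ (fun n => by cases n <;> simp [liftF, hh]))

lemma subst_rename : ∀ (A : Ty) (σ : ℕ → Ty) (f : ℕ → ℕ) (τ : ℕ → Ty), (∀ n, σ (f n) = τ n) →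
    subst σ (rename f A) = subst τ A := by
  intro A
  induction A with
  | var n => intro σ f τ h; simp [rename, subst, h]
  | arrow A B ihA ihB => intro σ f τ h; simp [rename, subst, ihA _ _ _ h, ihB _ _ _ h]
  | box A ih => intro σ f τ h; simp [rename, subst, ih _ _ _ h]
  | mu A ih =>
      intro σ f τ h
      show mu (subst (upS σ) (rename (liftF f) A)) = mu (subst (upS τ) A)
      refine congrArg mu (ih _ _ _ (fun n => ?_))
      cases n with
      | zero => simp [liftF, upS]
      | succ m => simp [liftF, upS, ← h m]

lemma rename_subst : ∀ (A : Ty) (f : ℕ → ℕ) (σ τ : ℕ → Ty), (∀ n, rename f (σ n) = τ n) →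
    rename f (subst σ A) = subst τ A := by
  intro A
  induction A with
  | var n => intro f σ τ h; simp [rename, subst, h]
  | arrow A B ihA ihB => intro f σ τ h; simp [rename, subst, ihA _ _ _ h, ihB _ _ _ h]
  | box A ih => intro f σ τ h; simp [rename, subst, ih _ _ _ h]
  | mu A ih =>
      intro f σ τ h
      show mu (rename (liftF f) (subst (upS σ) A)) = mu (subst (upS τ) A)
      refine congrArg mu (ih _ _ _ (fun n => ?_))
      cases n with
      | zero => simp [liftF, upS, rename]
      | succ m =>
          show rename (liftF f) (shiftUp (σ m)) = shiftUp (τ m)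
          rw [← h m]
          unfold shiftUp
          rw [rename_rename _ _ _ (fun n => (liftF f) (Nat.succ n)) (fun n => rfl),
              rename_rename _ _ _ (fun n => Nat.succ (f n)) (fun n => rfl)]
          exact rename_congr _ _ _ (fun n => by simp [liftF])

lemma subst_subst : ∀ (A : Ty) (σ ρ τ : ℕ → Ty), (∀ n, subst σ (ρ n) = τ n) →
    subst σ (subst ρ A) = subst τ A := by
  intro A
  induction A with
  | var n => intro σ ρ τ h; simp [subst, h]
  | arrow A B ihA ihB => intro σ ρ τ h; simp [subst, ihA _ _ _ h, ihB _ _ _ h]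
  | box A ih => intro σ ρ τ h; simp [subst, ih _ _ _ h]
  | mu A ih =>
      intro σ ρ τ h
      show mu (subst (upS σ) (subst (upS ρ) A)) = mu (subst (upS τ) A)
      refine congrArg mu (ih _ _ _ (fun n => ?_))
      cases n with
      | zero => simp [upS, subst]
      | succ m =>
          show subst (upS σ) (shiftUp (ρ m)) = shiftUp (τ m)
          rw [← h m]
          unfold shiftUp
          rw [subst_rename _ _ _ (fun n => upS σ (Nat.succ n)) (fun n => rfl)]
          exact (rename_subst _ _ _ _ (fun n => rfl)).symm

lemma subst_var_id : ∀ (A : Ty), subst Ty.var A = A := by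
  intro A
  induction A with
  | var n => simp [subst]
  | arrow A B ihA ihB => simp [subst, ihA, ihB]
  | box A ih => simp [subst, ih]
  | mu A ih =>
      show mu (subst (upS Ty.var) A) = mu A
      rw [subst_congr A (upS Ty.var) Ty.var (fun n => by cases n <;> simp [upS, shiftUp, rename]), ih]

end Ty


/-! ### Tail specification -/

inductive TSpec : Type
  | always | never | free (j : ℕ) (b : Bool)
  deriving DecidableEq

def bumpS : TSpec → TSpec
  | .free j _ => .free j true
  | s => s

def muS : TSpec → TSpec
  | .free 0 true => .always
  | .free 0 false => .never
  | .free (j+1) b => .free j b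
  | s => s

def spec : Ty → TSpec
  | .var j => .free j false
  | .box A => bumpS (spec A)
  | .arrow _ B => spec B
  | .mu A => muS (spec A)

def combineS : Bool → TSpec → TSpec
  | _, .always => .always
  | _, .never => .never
  | b, .free j c => .free j (b || c)

def mapF (f : ℕ → ℕ) : TSpec → TSpec
  | .free j b => .free (f j) b
  | s => s

def substS (g : ℕ → TSpec) : TSpec → TSpec
  | .free j b => combineS b (g j)
  | s => s

lemma spec_var (j : ℕ) : spec (Ty.var j) = .free j false := rfl
lemma spec_box (A : Ty) : spec (Ty.box A) = bumpS (spec A) := rfl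
lemma spec_arrow (A B : Ty) : spec (Ty.arrow A B) = spec B := rfl
lemma spec_mu (A : Ty) : spec (Ty.mu A) = muS (spec A) := rfl

lemma spec_rename : ∀ (A : Ty) (f : ℕ → ℕ), spec (Ty.rename f A) = mapF f (spec A) := by
  intro A
  induction A with
  | var n => intro f; simp [spec, Ty.rename, mapF]
  | arrow A B ihA ihB => intro f; simp [spec, Ty.rename, ihB]
  | box A ih =>
      intro f
      rw [show Ty.rename f (Ty.box A) = Ty.box (Ty.rename f A) from rfl, spec_box, spec_box, ih]
      rcases spec A with _ | _ | ⟨j, b⟩ <;> simp [bumpS, mapF]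
  | mu A ih =>
      intro f
      rw [Ty.rename_mu, spec_mu, spec_mu, ih]
      rcases spec A with _ | _ | ⟨j, b⟩
      · simp [muS, mapF]
      · simp [muS, mapF]
      · cases j with
        | zero => cases b <;> simp [muS, mapF, Ty.liftF]
        | succ m => cases b <;> simp [muS, mapF, Ty.liftF]

lemma spec_subst : ∀ (A : Ty) (σ : ℕ → Ty),
    spec (Ty.subst σ A) = substS (fun j => spec (σ j)) (spec A) := by
  intro A
  induction A with
  | var n =>
      intro σ
      rw [show Ty.subst σ (Ty.var n) = σ n from rfl, spec_var]
      rcases h' : spec (σ n) with _ | _ | _ <;> simp [substS, combineS, h']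
  | arrow A B ihA ihB =>
      intro σ
      rw [show Ty.subst σ (Ty.arrow A B) = Ty.arrow (Ty.subst σ A) (Ty.subst σ B) from rfl,
        spec_arrow, spec_arrow, ihB]
  | box A ih =>
      intro σ
      rw [show Ty.subst σ (Ty.box A) = Ty.box (Ty.subst σ A) from rfl, spec_box, spec_box, ih]
      rcases spec A with _ | _ | ⟨j, b⟩
      · simp [bumpS, substS]
      · simp [bumpS, substS]
      · show bumpS (combineS b (spec (σ j))) = combineS true (spec (σ j))
        rcases spec (σ j) with _ | _ | _ <;> simp [bumpS, combineS]
  | mu A ih =>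
      intro σ
      rw [Ty.subst_mu, spec_mu, spec_mu, ih]
      rcases spec A with _ | _ | ⟨j, b⟩
      · simp [muS, substS]
      · simp [muS, substS]
      · cases j with
        | zero =>
            have h0 : spec (Ty.upS σ 0) = TSpec.free 0 false := rfl
            show muS (combineS b (spec (Ty.upS σ 0))) = substS _ (muS (TSpec.free 0 b))
            rw [h0]
            cases b <;> simp [muS, combineS, substS]
        | succ m =>
            have h1 : spec (Ty.upS σ (m+1)) = mapF Nat.succ (spec (σ m)) := by
              show spec (Ty.shiftUp (σ m)) = _
              rw [Ty.shiftUp, spec_rename]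
            show muS (combineS b (spec (Ty.upS σ (m+1)))) = substS _ (muS (TSpec.free (m+1) b))
            rw [h1]
            rcases h' : spec (σ m) with _ | _ | ⟨j', b'⟩ <;>
              simp [muS, combineS, substS, mapF, h']

lemma tvAux_iff_spec : ∀ (A : Ty) (d t : ℕ), t ≤ d →
    (tvAux A d t = true ↔
      (spec A = .always ∨ ∃ j b, spec A = .free j b ∧ j < d ∧ (b = true ∨ d - t ≤ j))) := by
  intro A
  induction A with
  | var n =>
      intro d t ht
      simp only [tvAux, spec_var, decide_eq_true_eq]
      constructor
      · rintro ⟨h1, h2⟩; exact Or.inr ⟨n, false, rfl, h2, Or.inr h1⟩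
      · rintro (h | ⟨j, b, hjb, hlt, hb⟩)
        · simp at h
        · rw [TSpec.free.injEq] at hjb
          obtain ⟨rfl, rfl⟩ := hjb
          rcases hb with h | h
          · simp at h
          · exact ⟨h, hlt⟩
  | arrow A B ihA ihB =>
      intro d t ht
      show tvAux B d t = true ↔ _
      rw [ihB d t ht, spec_arrow]
  | box A ih =>
      intro d t ht
      show tvAux A d d = true ↔ _
      rw [ih d d le_rfl, spec_box]
      rcases h : spec A with _ | _ | ⟨j, b⟩
      · simp [bumpS]
      · simp [bumpS]
      · cases b <;> simp [bumpS] <;> omega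
  | mu A ih =>
      intro d t ht
      show tvAux A (d+1) t = true ↔ _
      rw [ih (d+1) t (by omega), spec_mu]
      rcases h : spec A with _ | _ | ⟨j, b⟩
      · simp [muS]
      · simp [muS]
      · cases j with
        | zero => cases b <;> simp [muS] <;> omega
        | succ m => cases b <;> simp [muS] <;> omega

lemma isTV_iff_spec (A : Ty) : IsTV A ↔ spec A = .always := by
  show tvAux A 0 0 = true ↔ _
  rw [tvAux_iff_spec A 0 0 le_rfl]
  constructor
  · rintro (h | ⟨j, b, _, hlt, _⟩)
    · exact h
    · omega
  · intro h; exact Or.inl h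

lemma spec_unfold (A : Ty) : spec (unfoldMu A) = spec (Ty.mu A) := by
  show spec (Ty.subst _ A) = muS (spec A)
  rw [spec_subst]
  rcases h : spec A with _ | _ | ⟨j, b⟩
  · simp [substS, h, muS]
  · simp [substS, h, muS]
  · cases j with
    | zero =>
        show combineS b (spec (Ty.mu A)) = muS (TSpec.free 0 b)
        rw [spec_mu, h]
        cases b <;> simp [muS, combineS]
    | succ m =>
        show combineS b (spec (Ty.var m)) = muS (TSpec.free (m+1) b)
        rw [spec_var]
        simp [muS, combineS]

lemma spec_subst_always_iff {σ τ : ℕ → Ty} (h : ∀ j, spec (σ j) = .always ↔ spec (τ j) = .always)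
    (C : Ty) : spec (Ty.subst σ C) = .always ↔ spec (Ty.subst τ C) = .always := by
  rw [spec_subst, spec_subst]
  rcases spec C with _ | _ | ⟨j, b⟩
  · simp [substS]
  · simp [substS]
  · show combineS b (spec (σ j)) = .always ↔ combineS b (spec (τ j)) = .always
    constructor
    · intro hc
      have h2 : spec (σ j) = .always := by
        rcases h' : spec (σ j) with _ | _ | _ <;> rw [h'] at hc <;> simp [combineS] at hc ⊢
      rw [(h j).mp h2]; simp [combineS]
    · intro hc
      have h2 : spec (τ j) = .always := by
        rcases h' : spec (τ j) with _ | _ | _ <;> rw [h'] at hc <;> simp [combineS] at hc ⊢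
      rw [← h j] at h2; rw [h2]; simp [combineS]

lemma spec_subst_always {σ : ℕ → Ty} {C : Ty} (h : spec C = .always) :
    spec (Ty.subst σ C) = .always := by
  rw [spec_subst, h]; rfl

lemma spec_tyTop : spec tyTop = .always := rfl

/-! ### Unguarded occurrences -/

def Ung : ℕ → Ty → Prop
  | x, .var j => j = x
  | _, .box _ => False
  | x, .arrow A B => spec (Ty.arrow A B) ≠ .always ∧ (Ung x A ∨ Ung x B)
  | x, .mu A => spec (Ty.mu A) ≠ .always ∧ Ung (x+1) A

lemma proper_iff_not_ung : ∀ (A : Ty) (x : ℕ), Proper A x ↔ ¬ Ung x A := by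
  intro A
  induction A with
  | var n => intro x; simp [Proper, Ung]
  | box A ih => intro x; simp [Proper, Ung]
  | arrow A B ihA ihB =>
      intro x
      show (Proper A x ∧ Proper B x) ∨ IsTV B ↔ ¬ (spec (Ty.arrow A B) ≠ .always ∧ (Ung x A ∨ Ung x B))
      rw [isTV_iff_spec, ihA, ihB, spec_arrow]
      by_cases h : spec B = TSpec.always <;> simp [h] <;> tauto
  | mu A ih =>
      intro x
      show Proper A (x+1) ∨ IsTV (Ty.mu A) ↔ ¬ (spec (Ty.mu A) ≠ .always ∧ Ung (x+1) A)
      rw [isTV_iff_spec, ih]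
      by_cases h : spec (Ty.mu A) = TSpec.always <;> simp [h]

lemma spec_rename_always_iff (f : ℕ → ℕ) (A : Ty) :
    spec (Ty.rename f A) = .always ↔ spec A = .always := by
  rw [spec_rename]
  rcases spec A with _ | _ | _ <;> simp [mapF]

lemma ung_rename : ∀ (A : Ty) (f : ℕ → ℕ) (x : ℕ), Ung x (Ty.rename f A) →
    ∃ z, f z = x ∧ Ung z A := by
  intro A
  induction A with
  | var n => intro f x h; exact ⟨n, h, rfl⟩
  | box A ih => intro f x h; exact absurd h (by simp [Ty.rename, Ung])
  | arrow A B ihA ihB =>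
      intro f x h
      obtain ⟨hs, h⟩ := h
      have hs' : spec (Ty.arrow A B) ≠ .always := by
        rw [spec_arrow]
        intro hB
        exact hs (by rw [spec_arrow, spec_rename, hB]; rfl)
      rcases h with h | h
      · obtain ⟨z, hz, hu⟩ := ihA f x h; exact ⟨z, hz, hs', Or.inl hu⟩
      · obtain ⟨z, hz, hu⟩ := ihB f x h; exact ⟨z, hz, hs', Or.inr hu⟩
  | mu A ih =>
      intro f x h
      rw [Ty.rename_mu] at h
      obtain ⟨hs, h⟩ := h
      have hs' : spec (Ty.mu A) ≠ .always := by
        intro hA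
        exact hs (by
          rw [← Ty.rename_mu, spec_rename_always_iff]
          exact hA)
      obtain ⟨z, hz, hu⟩ := ih _ _ h
      match z, hz with
      | 0, hz => simp [Ty.liftF] at hz
      | m+1, hz =>
          refine ⟨m, ?_, hs', hu⟩
          simp [Ty.liftF] at hz
          omega

lemma ung_subst : ∀ (A : Ty) (σ : ℕ → Ty) (x : ℕ), Ung x (Ty.subst σ A) →
    ∃ n, Ung n A ∧ Ung x (σ n) := by
  intro A
  induction A with
  | var n => intro σ x h; exact ⟨n, rfl, h⟩
  | box A ih => intro σ x h; exact absurd h (by simp [Ty.subst, Ung])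
  | arrow A B ihA ihB =>
      intro σ x h
      obtain ⟨hs, h⟩ := h
      have hs' : spec (Ty.arrow A B) ≠ .always := by
        rw [spec_arrow]; intro hB
        exact hs (by rw [spec_arrow]; exact spec_subst_always hB)
      rcases h with h | h
      · obtain ⟨n, hn, hu⟩ := ihA σ x h; exact ⟨n, ⟨hs', Or.inl hn⟩, hu⟩
      · obtain ⟨n, hn, hu⟩ := ihB σ x h; exact ⟨n, ⟨hs', Or.inr hn⟩, hu⟩
  | mu A ih =>
      intro σ x h
      rw [Ty.subst_mu] at h
      obtain ⟨hs, h⟩ := h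
      have hs' : spec (Ty.mu A) ≠ .always := by
        intro hA
        exact hs (by rw [← Ty.subst_mu]; exact spec_subst_always hA)
      obtain ⟨n, hn, hu⟩ := ih _ _ h
      match n, hn, hu with
      | 0, hn, hu =>
          exact absurd (show (0:ℕ) = x + 1 from hu) (by omega)
      | m+1, hn, hu =>
          obtain ⟨z, hz, hu'⟩ := ung_rename (σ m) Nat.succ _ hu
          have hzx : z = x := by omega
          subst hzx
          exact ⟨m, ⟨hs', hn⟩, hu'⟩

lemma spec_free_ung : ∀ (A : Ty) (j : ℕ), spec A = .free j false → Ung j A := by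
  intro A
  induction A with
  | var n =>
      intro j h
      rw [spec_var] at h
      cases h
      rfl
  | box A ih =>
      intro j h
      rw [spec_box] at h
      exfalso
      rcases h' : spec A with _ | _ | ⟨j', b'⟩ <;> rw [h'] at h <;> simp [bumpS] at h
  | arrow A B ihA ihB =>
      intro j h
      rw [spec_arrow] at h
      exact ⟨by rw [spec_arrow, h]; simp, Or.inr (ihB j h)⟩
  | mu A ih =>
      intro j h
      rw [spec_mu] at h
      rcases h' : spec A with _ | _ | ⟨j', b'⟩ <;> rw [h'] at h
      · simp [muS] at h
      · simp [muS] at h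
      · cases j' with
        | zero => cases b' <;> simp [muS] at h
        | succ m =>
            simp only [muS, TSpec.free.injEq] at h
            obtain ⟨rfl, rfl⟩ := h
            exact ⟨by rw [spec_mu, h']; simp [muS], ih _ h'⟩

/-! ### Tail bullet count -/

def tb : Ty → ℕ
  | .var _ => 0
  | .box A => tb A + 1
  | .arrow _ B => tb B
  | .mu A => match spec A with
      | .free 0 _ => 0
      | _ => tb A

lemma tb_mu_free0 {A : Ty} {b : Bool} (h : spec A = .free 0 b) : tb (Ty.mu A) = 0 := by
  show (match spec A with | .free 0 _ => 0 | _ => tb A) = 0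
  rw [h]
  rfl

lemma tb_mu_other {A : Ty} (h : ∀ b, spec A ≠ .free 0 b) : tb (Ty.mu A) = tb A := by
  show (match spec A with | .free 0 _ => 0 | _ => tb A) = tb A
  rcases h' : spec A with _ | _ | ⟨j, b⟩
  · rfl
  · rfl
  · cases j with
    | zero => exact absurd h' (h b)
    | succ m => rfl

lemma tb_rename : ∀ (A : Ty) (f : ℕ → ℕ), tb (Ty.rename f A) = tb A := by
  intro A
  induction A with
  | var n => intro f; rfl
  | box A ih => intro f; show tb (Ty.rename f A) + 1 = tb A + 1; rw [ih]
  | arrow A B ihA ihB => intro f; show tb (Ty.rename f B) = tb B; rw [ihB]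
  | mu A ih =>
      intro f
      rw [Ty.rename_mu]
      rcases h : spec A with _ | _ | ⟨j, b⟩
      · rw [tb_mu_other, tb_mu_other, ih]
        · intro b hb; rw [h] at hb; cases hb
        · intro b hb; rw [spec_rename, h] at hb; cases hb
      · rw [tb_mu_other, tb_mu_other, ih]
        · intro b hb; rw [h] at hb; cases hb
        · intro b hb; rw [spec_rename, h] at hb; cases hb
      · cases j with
        | zero =>
            rw [tb_mu_free0 h, tb_mu_free0]
            rw [spec_rename, h]
            rfl
        | succ m =>
            rw [tb_mu_other, tb_mu_other, ih]
            · intro b' hb; rw [h] at hb; cases hb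
            · intro b' hb; rw [spec_rename, h] at hb; simp [mapF, Ty.liftF] at hb

lemma tb_subst_free : ∀ (A : Ty) (σ : ℕ → Ty) (j : ℕ) (b : Bool), spec A = .free j b →
    tb (Ty.subst σ A) = tb A + tb (σ j) := by
  intro A
  induction A with
  | var n =>
      intro σ j b h
      rw [spec_var] at h
      cases h
      show tb (σ n) = 0 + tb (σ n)
      omega
  | box A ih =>
      intro σ j b h
      rw [spec_box] at h
      rcases h' : spec A with _ | _ | ⟨j', b'⟩ <;> rw [h'] at h <;> simp only [bumpS] at h
      · cases h
      · cases h
      · cases h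
        show tb (Ty.subst σ A) + 1 = (tb A + 1) + tb (σ j)
        rw [ih σ j b' h']
        omega
  | arrow A B ihA ihB =>
      intro σ j b h
      rw [spec_arrow] at h
      show tb (Ty.subst σ B) = tb B + tb (σ j)
      exact ihB σ j b h
  | mu A ih =>
      intro σ j b h
      rw [spec_mu] at h
      rcases h' : spec A with _ | _ | ⟨j', b'⟩ <;> rw [h'] at h <;> simp only [muS] at h
      · cases h
      · cases h
      · rw [Ty.subst_mu]
        cases j' with
        | zero => cases b' <;> cases h
        | succ m =>
            have hjm : m = j ∧ b' = b := by
              rw [TSpec.free.injEq] at h; exact h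
            obtain ⟨rfl, rfl⟩ := hjm
            have hup : spec (Ty.upS σ (m+1)) = mapF Nat.succ (spec (σ m)) := by
              show spec (Ty.shiftUp (σ m)) = _
              rw [Ty.shiftUp, spec_rename]
            have hsub : spec (Ty.subst (Ty.upS σ) A) = combineS b' (spec (Ty.upS σ (m+1))) := by
              rw [spec_subst, h']
              rfl
            have htb : tb (Ty.subst (Ty.upS σ) A) = tb A + tb (Ty.upS σ (m+1)) :=
              ih _ _ _ h'
            have htb2 : tb (Ty.upS σ (m+1)) = tb (σ m) := by
              show tb (Ty.shiftUp (σ m)) = _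
              rw [Ty.shiftUp, tb_rename]
            rw [tb_mu_other, tb_mu_other]
            · rw [htb, htb2]
            · intro b'' hb; rw [h'] at hb; cases hb
            · intro b'' hb
              rw [hsub, hup] at hb
              rcases hspec : spec (σ m) with _ | _ | ⟨j'', b''2⟩ <;> rw [hspec] at hb <;>
                simp [mapF, combineS] at hb

lemma tb_subst_never : ∀ (A : Ty) (σ : ℕ → Ty), spec A = .never →
    tb (Ty.subst σ A) = tb A := by
  intro A
  induction A with
  | var n => intro σ h; cases h
  | box A ih =>
      intro σ h
      rw [spec_box] at h
      rcases h' : spec A with _ | _ | ⟨j', b'⟩ <;> rw [h'] at h <;> simp only [bumpS] at h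
      · cases h
      · show tb (Ty.subst σ A) + 1 = tb A + 1
        rw [ih σ h']
      · cases h
  | arrow A B ihA ihB =>
      intro σ h
      rw [spec_arrow] at h
      show tb (Ty.subst σ B) = tb B
      exact ihB σ h
  | mu A ih =>
      intro σ h
      rw [spec_mu] at h
      rw [Ty.subst_mu]
      rcases h' : spec A with _ | _ | ⟨j', b'⟩ <;> rw [h'] at h <;> simp only [muS] at h
      · cases h
      · rw [tb_mu_other, tb_mu_other, ih (Ty.upS σ) h']
        · intro b hb; rw [h'] at hb; cases hb
        · intro b hb
          rw [spec_subst, h'] at hb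
          cases hb
      · cases j' with
        | zero =>
            cases b'
            · have h0 : spec (Ty.subst (Ty.upS σ) A) = .free 0 false := by
                rw [spec_subst, h']
                show combineS false (spec (Ty.var 0)) = _
                rw [spec_var]
                rfl
              rw [tb_mu_free0 h', tb_mu_free0 h0]
            · cases h
        | succ m => cases h

lemma tb_pos_of_bullet : ∀ (A : Ty) (j : ℕ), spec A = .free j true → 1 ≤ tb A := by
  intro A
  induction A with
  | var n => intro j h; rw [spec_var] at h; cases h
  | box A ih => intro j h; show 1 ≤ tb A + 1; omega
  | arrow A B ihA ihB => intro j h; exact ihB j h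
  | mu A ih =>
      intro j h
      rw [spec_mu] at h
      rcases h' : spec A with _ | _ | ⟨j', b'⟩ <;> rw [h'] at h <;> simp only [muS] at h
      · cases h
      · cases h
      · cases j' with
        | zero => cases b' <;> cases h
        | succ m =>
            rw [TSpec.free.injEq] at h
            obtain ⟨rfl, rfl⟩ := h
            rw [tb_mu_other]
            · exact ih _ h'
            · intro b hb; rw [h'] at hb; cases hb

lemma tb_zero_of_nobullet : ∀ (A : Ty) (j : ℕ), spec A = .free j false → tb A = 0 := by
  intro A
  induction A with
  | var n => intro j h; rfl
  | box A ih =>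
      intro j h
      rw [spec_box] at h
      rcases h' : spec A with _ | _ | ⟨j', b'⟩ <;> rw [h'] at h <;> simp [bumpS] at h
  | arrow A B ihA ihB => intro j h; exact ihB j h
  | mu A ih =>
      intro j h
      rw [spec_mu] at h
      rcases h' : spec A with _ | _ | ⟨j', b'⟩ <;> rw [h'] at h <;> simp only [muS] at h
      · cases h
      · cases h
      · cases j' with
        | zero => cases b' <;> cases h
        | succ m =>
            rw [TSpec.free.injEq] at h
            obtain ⟨rfl, rfl⟩ := h
            rw [tb_mu_other]
            · exact ih _ h'
            · intro b hb; rw [h'] at hb; cases hb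

lemma tb_unfold {A : Ty} (h : spec (Ty.mu A) ≠ .always) : tb (unfoldMu A) = tb (Ty.mu A) := by
  show tb (Ty.subst _ A) = _
  rw [spec_mu] at h
  rcases h' : spec A with _ | _ | ⟨j, b⟩
  · exact absurd (by rw [h']; rfl) h
  · rw [tb_subst_never A _ h', tb_mu_other]
    intro b hb; rw [h'] at hb; cases hb
  · cases j with
    | zero =>
        cases b
        · rw [tb_subst_free A _ 0 false h', tb_mu_free0 h', tb_zero_of_nobullet A 0 h']
        · exact absurd (by rw [h']; rfl) h
    | succ m =>
        rw [tb_subst_free A _ (m+1) b h', tb_mu_other]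
        · show tb A + tb (Ty.var m) = tb A
          rfl
        · intro b' hb; rw [h'] at hb; cases hb

/-! ### Spine analysis -/

inductive SpineRes : Type
  | loop | head | fvar (j : ℕ)
  deriving DecidableEq

def spine : Ty → SpineRes
  | .var j => .fvar j
  | .mu A => match spine A with
      | .fvar 0 => .loop
      | .fvar (j+1) => .fvar j
      | r => r
  | _ => .head

lemma spine_var (j : ℕ) : spine (Ty.var j) = .fvar j := rfl
lemma spine_box (A : Ty) : spine (Ty.box A) = .head := rfl
lemma spine_arrow (A B : Ty) : spine (Ty.arrow A B) = .head := rfl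
lemma spine_mu (A : Ty) : spine (Ty.mu A) =
    (match spine A with
      | .fvar 0 => .loop
      | .fvar (j+1) => .fvar j
      | r => r) := rfl

def mapSp (f : ℕ → ℕ) : SpineRes → SpineRes
  | .fvar j => .fvar (f j)
  | r => r

lemma spine_rename : ∀ (A : Ty) (f : ℕ → ℕ), spine (Ty.rename f A) = mapSp f (spine A) := by
  intro A
  induction A with
  | var n => intro f; rfl
  | box A ih => intro f; rfl
  | arrow A B ihA ihB => intro f; rfl
  | mu A ih =>
      intro f
      rw [Ty.rename_mu, spine_mu, spine_mu, ih]
      rcases spine A with _ | _ | j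
      · rfl
      · rfl
      · cases j with
        | zero => rfl
        | succ m => rfl

lemma spine_subst : ∀ (A : Ty) (σ : ℕ → Ty), spine (Ty.subst σ A) =
    (match spine A with
      | .fvar j => spine (σ j)
      | r => r) := by
  intro A
  induction A with
  | var n => intro σ; rfl
  | box A ih => intro σ; rfl
  | arrow A B ihA ihB => intro σ; rfl
  | mu A ih =>
      intro σ
      rw [Ty.subst_mu, spine_mu, spine_mu, ih]
      rcases h : spine A with _ | _ | j
      · rfl
      · rfl
      · cases j with
        | zero => rfl
        | succ m =>
            show (match spine (Ty.upS σ (m+1)) with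
              | SpineRes.fvar 0 => SpineRes.loop
              | SpineRes.fvar (j+1) => SpineRes.fvar j
              | r => r) = spine (σ m)
            have : spine (Ty.upS σ (m+1)) = mapSp Nat.succ (spine (σ m)) := by
              show spine (Ty.shiftUp (σ m)) = _
              rw [Ty.shiftUp, spine_rename]
            rw [this]
            rcases spine (σ m) with _ | _ | j'
            · rfl
            · rfl
            · rfl

lemma spine_unfold (A : Ty) : spine (unfoldMu A) = spine (Ty.mu A) := by
  show spine (Ty.subst _ A) = _
  rw [spine_subst, spine_mu]
  rcases h : spine A with _ | _ | j
  · rfl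
  · rfl
  · cases j with
    | zero =>
        show spine (Ty.mu A) = SpineRes.loop
        rw [spine_mu, h]
    | succ m => rfl

lemma spine_fvar_spec : ∀ (A : Ty) (j : ℕ), spine A = .fvar j → spec A = .free j false := by
  intro A
  induction A with
  | var n => intro j h; cases h; rfl
  | box A ih => intro j h; cases h
  | arrow A B ihA ihB => intro j h; cases h
  | mu A ih =>
      intro j h
      rw [spine_mu] at h
      rcases h' : spine A with _ | _ | j' <;> rw [h'] at h
      · cases h
      · cases h
      · cases j' with
        | zero => cases h
        | succ m =>
            cases h
            rw [spec_mu, ih _ h']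
            rfl

lemma spine_loop_spec : ∀ (A : Ty), spine A = .loop → spec A = .never := by
  intro A
  induction A with
  | var n => intro h; cases h
  | box A ih => intro h; cases h
  | arrow A B ihA ihB => intro h; cases h
  | mu A ih =>
      intro h
      rw [spine_mu] at h
      rcases h' : spine A with _ | _ | j' <;> rw [h'] at h
      · rw [spec_mu, ih h']; rfl
      · cases h
      · cases j' with
        | zero =>
            rw [spec_mu, spine_fvar_spec A 0 h']
            rfl
        | succ m => cases h

lemma wf_spine : ∀ (A : Ty), WF A → spine A ≠ .loop := by
  intro A
  induction A with
  | var n => intro _ h; cases h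
  | box A ih => intro _ h; cases h
  | arrow A B ihA ihB => intro _ h; cases h
  | mu A ih =>
      intro hwf h
      obtain ⟨hwfA, hP⟩ := hwf
      rw [spine_mu] at h
      rcases h' : spine A with _ | _ | j' <;> rw [h'] at h
      · exact ih hwfA h'
      · cases h
      · cases j' with
        | zero =>
            have := spec_free_ung A 0 (spine_fvar_spec A 0 h')
            exact (proper_iff_not_ung A 0).mp hP this
        | succ m => cases h

/-! ### Composition helpers and guarded depth -/

lemma unfoldMu_eq (C : Ty) : unfoldMu C =
    Ty.subst (fun k => match k with | 0 => Ty.mu C | Nat.succ j => Ty.var j) C := rfl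

lemma subst_shiftUp (σ : ℕ → Ty) (X : Ty) :
    Ty.subst σ (Ty.shiftUp X) = Ty.subst (fun n => σ (n+1)) X := by
  rw [Ty.shiftUp]
  exact Ty.subst_rename X σ Nat.succ _ (fun n => rfl)

lemma unfold_subst (σ : ℕ → Ty) (C : Ty) :
    unfoldMu (Ty.subst (Ty.upS σ) C) =
      Ty.subst (fun k => match k with | 0 => Ty.subst σ (Ty.mu C) | Nat.succ j => σ j) C := by
  rw [unfoldMu_eq]
  refine Ty.subst_subst C _ _ _ (fun n => ?_)
  cases n with
  | zero =>
      show Ty.mu (Ty.subst (Ty.upS σ) C) = Ty.subst σ (Ty.mu C)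
      rw [Ty.subst_mu]
  | succ m =>
      show Ty.subst (fun k => match k with
          | 0 => Ty.mu (Ty.subst (Ty.upS σ) C)
          | Nat.succ j => Ty.var j) (Ty.shiftUp (σ m)) = σ m
      rw [subst_shiftUp, Ty.subst_congr (σ m) _ Ty.var (fun n => rfl)]
      exact Ty.subst_var_id (σ m)

def gd : Ty → ℕ
  | .var _ => 0
  | .box _ => 0
  | .arrow A B => if spec B = .always then 0 else max (gd A) (gd B) + 1
  | .mu A => if spec (Ty.mu A) = .always then 0 else gd A + 1

lemma gd_var (n : ℕ) : gd (Ty.var n) = 0 := rfl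
lemma gd_box (A : Ty) : gd (Ty.box A) = 0 := rfl
lemma gd_arrow (A B : Ty) :
    gd (Ty.arrow A B) = if spec B = .always then 0 else max (gd A) (gd B) + 1 := rfl
lemma gd_mu (A : Ty) : gd (Ty.mu A) = if spec (Ty.mu A) = .always then 0 else gd A + 1 := rfl

lemma gd_subst_le : ∀ (A : Ty) (σ : ℕ → Ty), (∀ n, Ung n A → ∃ m, σ n = Ty.var m) →
    gd (Ty.subst σ A) ≤ gd A := by
  intro A
  induction A with
  | var n =>
      intro σ h
      obtain ⟨m, hm⟩ := h n rfl
      show gd (σ n) ≤ 0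
      rw [hm]
      exact le_rfl
  | box A ih => intro σ h; exact le_rfl
  | arrow A B ihA ihB =>
      intro σ h
      rw [show Ty.subst σ (Ty.arrow A B) = Ty.arrow (Ty.subst σ A) (Ty.subst σ B) from rfl]
      by_cases hB : spec B = .always
      · rw [gd_arrow, gd_arrow, if_pos hB, if_pos (spec_subst_always hB)]
      · rw [gd_arrow, gd_arrow, if_neg hB]
        by_cases hB' : spec (Ty.subst σ B) = .always
        · rw [if_pos hB']; omega
        · rw [if_neg hB']
          have h1 := ihA σ (fun n hn => h n ⟨by rw [spec_arrow]; exact hB, Or.inl hn⟩)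
          have h2 := ihB σ (fun n hn => h n ⟨by rw [spec_arrow]; exact hB, Or.inr hn⟩)
          omega
  | mu A ih =>
      intro σ h
      rw [Ty.subst_mu]
      by_cases hA : spec (Ty.mu A) = .always
      · rw [gd_mu, gd_mu, if_pos hA, if_pos (by rw [← Ty.subst_mu]; exact spec_subst_always hA)]
      · rw [gd_mu, gd_mu, if_neg hA]
        by_cases hA' : spec (Ty.mu (Ty.subst (Ty.upS σ) A)) = .always
        · rw [if_pos hA']; omega
        · rw [if_neg hA']
          have h1 := ih (Ty.upS σ) (fun n hn => ?_)
          · omega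
          · cases n with
            | zero => exact ⟨0, rfl⟩
            | succ m =>
                obtain ⟨m', hm'⟩ := h m ⟨hA, hn⟩
                refine ⟨m' + 1, ?_⟩
                show Ty.shiftUp (σ m) = _
                rw [hm']
                rfl

lemma gd_unfold_lt {A : Ty} (hP : Proper A 0) (hs : spec (Ty.mu A) ≠ .always) :
    gd (unfoldMu A) < gd (Ty.mu A) := by
  have h1 : gd (unfoldMu A) ≤ gd A := by
    rw [unfoldMu_eq]
    refine gd_subst_le A _ (fun n hn => ?_)
    cases n with
    | zero => exact absurd hn ((proper_iff_not_ung A 0).mp hP)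
    | succ m => exact ⟨m, rfl⟩
  rw [gd_mu, if_neg hs]
  omega

lemma wf_rename : ∀ (A : Ty) (f : ℕ → ℕ), WF A → WF (Ty.rename f A) := by
  intro A
  induction A with
  | var n => intro f _; trivial
  | box A ih => intro f h; exact ih f h
  | arrow A B ihA ihB => intro f h; exact ⟨ihA f h.1, ihB f h.2⟩
  | mu A ih =>
      intro f h
      rw [Ty.rename_mu]
      refine ⟨ih _ h.1, ?_⟩
      rw [proper_iff_not_ung]
      intro hu
      obtain ⟨z, hz, hu'⟩ := ung_rename A _ 0 hu
      cases z with
      | zero => exact (proper_iff_not_ung A 0).mp h.2 hu'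
      | succ m => simp [Ty.liftF] at hz

lemma wf_subst : ∀ (A : Ty) (σ : ℕ → Ty), WF A → (∀ n, WF (σ n)) → WF (Ty.subst σ A) := by
  intro A
  induction A with
  | var n => intro σ _ hσ; exact hσ n
  | box A ih => intro σ h hσ; exact ih σ h hσ
  | arrow A B ihA ihB => intro σ h hσ; exact ⟨ihA σ h.1 hσ, ihB σ h.2 hσ⟩
  | mu A ih =>
      intro σ h hσ
      rw [Ty.subst_mu]
      refine ⟨ih _ h.1 (fun n => ?_), ?_⟩
      · cases n with
        | zero => trivial
        | succ m => exact wf_rename (σ m) Nat.succ (hσ m)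
      · rw [proper_iff_not_ung]
        intro hu
        obtain ⟨n, hn, hu'⟩ := ung_subst A _ 0 hu
        cases n with
        | zero => exact (proper_iff_not_ung A 0).mp h.2 hn
        | succ m =>
            obtain ⟨z, hz, _⟩ := ung_rename (σ m) Nat.succ 0 hu'
            omega

lemma wf_unfold {A : Ty} (h : WF (Ty.mu A)) : WF (unfoldMu A) := by
  rw [unfoldMu_eq]
  refine wf_subst A _ h.1 (fun n => ?_)
  cases n with
  | zero => exact h
  | succ m => trivial

/-! ### The depth-indexed simulation -/

inductive LE : ℕ → Ty → Ty → Prop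
  | zero (A B : Ty) : LE 0 A B
  | top {n : ℕ} {A B : Ty} : spec A = .always → spec B = .always → LE n A B
  | bot {n : ℕ} {A B : Ty} : spine A = .loop → spine B = .loop → LE n A B
  | fvar {n : ℕ} (j : ℕ) : LE n (Ty.var j) (Ty.var j)
  | box {n : ℕ} {A B : Ty} : spec A ≠ .always → spec B ≠ .always →
      LE n A B → LE (n+1) (Ty.box A) (Ty.box B)
  | arrow {n : ℕ} {A₁ A₂ B₁ B₂ : Ty} :
      spec A₂ ≠ .always → spec B₂ ≠ .always →
      LE n A₁ B₁ → LE n A₂ B₂ → LE (n+1) (Ty.arrow A₁ A₂) (Ty.arrow B₁ B₂)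
  | muL {n : ℕ} {A B : Ty} : spec (Ty.mu A) ≠ .always →
      LE n (unfoldMu A) B → LE n (Ty.mu A) B
  | muR {n : ℕ} {A B : Ty} : spec (Ty.mu B) ≠ .always →
      LE n A (unfoldMu B) → LE n A (Ty.mu B)

lemma bumpS_always {s : TSpec} : bumpS s = .always ↔ s = .always := by
  rcases s with _ | _ | ⟨j, b⟩ <;> simp [bumpS]

theorem SML : ∀ (n : ℕ) (C : Ty) (σ τ : ℕ → Ty),
    (∀ j, spine C = .fvar j → LE n (σ j) (τ j)) →
    (∀ j k, k < n → LE k (σ j) (τ j)) →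
    (∀ j, spec (σ j) = .always ↔ spec (τ j) = .always) →
    LE n (Ty.subst σ C) (Ty.subst τ C) := by
  intro n
  induction n using Nat.strong_induction_on with
  | h n IHn =>
  intro C
  induction C with
  | var j =>
      intro σ τ Hv Hlt Htv
      exact Hv j rfl
  | box C ihC =>
      intro σ τ Hv Hlt Htv
      by_cases hTV : spec (Ty.subst σ (Ty.box C)) = .always
      · exact LE.top hTV ((spec_subst_always_iff Htv _).mp hTV)
      · cases n with
        | zero => exact LE.zero _ _
        | succ n' =>
            have hτ : spec (Ty.subst τ (Ty.box C)) ≠ .always :=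
              fun h => hTV ((spec_subst_always_iff Htv _).mpr h)
            show LE (n'+1) (Ty.box (Ty.subst σ C)) (Ty.box (Ty.subst τ C))
            refine LE.box ?_ ?_ (IHn n' (Nat.lt_succ_self n') C σ τ ?_ ?_ Htv)
            · intro h; exact hTV (by rw [show Ty.subst σ (Ty.box C) = Ty.box (Ty.subst σ C) from rfl, spec_box, bumpS_always]; exact h)
            · intro h; exact hτ (by rw [show Ty.subst τ (Ty.box C) = Ty.box (Ty.subst τ C) from rfl, spec_box, bumpS_always]; exact h)
            · intro j _; exact Hlt j n' (Nat.lt_succ_self n')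
            · intro j k hk; exact Hlt j k (hk.trans (Nat.lt_succ_self n'))
  | arrow C₁ C₂ ih₁ ih₂ =>
      intro σ τ Hv Hlt Htv
      by_cases hTV : spec (Ty.subst σ (Ty.arrow C₁ C₂)) = .always
      · exact LE.top hTV ((spec_subst_always_iff Htv _).mp hTV)
      · cases n with
        | zero => exact LE.zero _ _
        | succ n' =>
            have hτ : spec (Ty.subst τ (Ty.arrow C₁ C₂)) ≠ .always :=
              fun h => hTV ((spec_subst_always_iff Htv _).mpr h)
            show LE (n'+1) (Ty.arrow (Ty.subst σ C₁) (Ty.subst σ C₂))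
              (Ty.arrow (Ty.subst τ C₁) (Ty.subst τ C₂))
            refine LE.arrow ?_ ?_
              (IHn n' (Nat.lt_succ_self n') C₁ σ τ (fun j _ => Hlt j n' (Nat.lt_succ_self n'))
                (fun j k hk => Hlt j k (hk.trans (Nat.lt_succ_self n'))) Htv)
              (IHn n' (Nat.lt_succ_self n') C₂ σ τ (fun j _ => Hlt j n' (Nat.lt_succ_self n'))
                (fun j k hk => Hlt j k (hk.trans (Nat.lt_succ_self n'))) Htv)
            · exact hTV
            · exact hτ
  | mu C₁ ihC =>
      intro σ τ Hv Hlt Htv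
      by_cases hTV : spec (Ty.subst σ (Ty.mu C₁)) = .always
      · exact LE.top hTV ((spec_subst_always_iff Htv _).mp hTV)
      · have hτ : spec (Ty.subst τ (Ty.mu C₁)) ≠ .always :=
          fun h => hTV ((spec_subst_always_iff Htv _).mpr h)
        by_cases hLoop : spine (Ty.mu C₁) = .loop
        · refine LE.bot ?_ ?_
          · rw [spine_subst, hLoop]
          · rw [spine_subst, hLoop]
        · rw [Ty.subst_mu, Ty.subst_mu]
          refine LE.muL (by rw [← Ty.subst_mu]; exact hTV)
            (LE.muR (by rw [← Ty.subst_mu]; exact hτ) ?_)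
          rw [unfold_subst, unfold_subst]
          refine ihC _ _ ?_ ?_ ?_
          · intro j hj
            cases j with
            | zero =>
                exact absurd (by rw [spine_mu, hj]) hLoop
            | succ m =>
                have : spine (Ty.mu C₁) = .fvar m := by rw [spine_mu, hj]
                exact Hv m this
          · intro j k hk
            cases j with
            | zero =>
                show LE k (Ty.subst σ (Ty.mu C₁)) (Ty.subst τ (Ty.mu C₁))
                exact IHn k hk (Ty.mu C₁) σ τ
                  (fun j' _ => Hlt j' k hk)
                  (fun j' k' hk' => Hlt j' k' (hk'.trans hk)) Htv
            | succ m => exact Hlt m k hk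
          · intro j
            cases j with
            | zero => exact spec_subst_always_iff Htv (Ty.mu C₁)
            | succ m => exact Htv m

lemma LE_refl : ∀ (n : ℕ) (A : Ty), LE n A A := by
  intro n
  induction n using Nat.strong_induction_on with
  | h n IHn =>
  intro A
  cases A with
  | var j => exact LE.fvar j
  | box A =>
      cases n with
      | zero => exact LE.zero _ _
      | succ n' =>
          by_cases h : spec A = .always
          · exact LE.top (by rw [spec_box, h]; rfl) (by rw [spec_box, h]; rfl)
          · exact LE.box h h (IHn n' (Nat.lt_succ_self n') A)
  | arrow A B =>
      cases n with
      | zero => exact LE.zero _ _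
      | succ n' =>
          by_cases h : spec B = .always
          · exact LE.top (by rw [spec_arrow]; exact h) (by rw [spec_arrow]; exact h)
          · exact LE.arrow h h (IHn n' (Nat.lt_succ_self n') A) (IHn n' (Nat.lt_succ_self n') B)
  | mu A =>
      by_cases hTV : spec (Ty.mu A) = .always
      · exact LE.top hTV hTV
      · by_cases hLoop : spine (Ty.mu A) = .loop
        · exact LE.bot hLoop hLoop
        · refine LE.muL hTV (LE.muR hTV ?_)
          rw [unfoldMu_eq]
          refine SML n A _ _ ?_ ?_ (fun j => Iff.rfl)
          · intro j hj
            cases j with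
            | zero => exact absurd (by rw [spine_mu, hj]) hLoop
            | succ m => exact LE.fvar m
          · intro j k hk
            cases j with
            | zero => exact IHn k hk (Ty.mu A)
            | succ m => exact LE.fvar m

/-! ### Transitivity and inversion of the simulation -/

lemma LE_top_right {n : ℕ} {A B C : Ty} (h : LE n A B) (hB : spec B = .always)
    (hC : spec C = .always) : LE n A C := by
  induction h with
  | zero => exact LE.zero _ _
  | top hA _ => exact LE.top hA hC
  | bot hA hB' =>
      rw [spine_loop_spec _ hB'] at hB
      cases hB
  | fvar j => rw [spec_var] at hB; cases hB
  | box hA hB' h ih =>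
      rw [spec_box] at hB
      exact absurd (bumpS_always.mp hB) hB'
  | arrow hA hB' h1 h2 ih1 ih2 =>
      rw [spec_arrow] at hB
      exact absurd hB hB'
  | muL hside h ih => exact LE.muL hside (ih hB)
  | muR hside h ih => exact absurd hB hside

lemma LE_bot_right {n : ℕ} {A B C : Ty} (h : LE n A B) (hB : spine B = .loop)
    (hC : spine C = .loop) : LE n A C := by
  induction h with
  | zero => exact LE.zero _ _
  | top hA hB' => rw [spine_loop_spec _ hB] at hB'; cases hB'
  | bot hA _ => exact LE.bot hA hC
  | fvar j => cases hB
  | box _ _ _ _ => cases hB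
  | arrow _ _ _ _ _ _ => cases hB
  | muL hside h ih => exact LE.muL hside (ih hB)
  | muR hside h ih => exact ih (by rw [spine_unfold]; exact hB)

lemma LE_unfoldR {n : ℕ} {A B₁ C : Ty} (h : LE n A C) (hC : C = Ty.mu B₁)
    (hside : spec (Ty.mu B₁) ≠ .always) : LE n A (unfoldMu B₁) := by
  induction h with
  | zero => exact LE.zero _ _
  | top hA hB => rw [hC] at hB; exact absurd hB hside
  | bot hA hB =>
      rw [hC] at hB
      exact LE.bot hA (by rw [spine_unfold]; exact hB)
  | fvar j => cases hC
  | box _ _ _ _ => cases hC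
  | arrow _ _ _ _ _ _ => cases hC
  | muL hside' h ih => exact LE.muL hside' (ih hC)
  | muR hside' h ih =>
      cases hC
      exact h

lemma LE_unfoldL {n : ℕ} {A₁ B C : Ty} (h : LE n C B) (hC : C = Ty.mu A₁)
    (hside : spec (Ty.mu A₁) ≠ .always) : LE n (unfoldMu A₁) B := by
  induction h with
  | zero => exact LE.zero _ _
  | top hA hB => rw [hC] at hA; exact absurd hA hside
  | bot hA hB =>
      rw [hC] at hA
      exact LE.bot (by rw [spine_unfold]; exact hA) hB
  | fvar j => cases hC
  | box _ _ _ _ => cases hC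
  | arrow _ _ _ _ _ _ => cases hC
  | muR hside' h ih => exact LE.muR hside' (ih hC)
  | muL hside' h ih =>
      cases hC
      exact h

lemma LE_box_right_aux {n' : ℕ} {B₁ C₁ : Ty}
    (hB : spec B₁ ≠ .always) (hC : spec C₁ ≠ .always)
    (ih : ∀ {A' : Ty}, LE n' A' B₁ → LE n' A' C₁) :
    ∀ {m : ℕ} {A D : Ty}, LE m A D → D = Ty.box B₁ → m = n' + 1 → LE (n'+1) A (Ty.box C₁) := by
  intro m A D h
  induction h with
  | zero => intro _ hm; cases hm
  | top hA hD =>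
      intro hD' _
      rw [hD', spec_box] at hD
      exact absurd (bumpS_always.mp hD) hB
  | bot hA hD => intro hD' _; rw [hD'] at hD; cases hD
  | fvar j => intro hD _; cases hD
  | box hA hB' h' ih' =>
      intro hD hm
      injection hD with hD1
      cases hD1
      cases hm
      exact LE.box hA hC (ih h')
  | arrow _ _ _ _ _ _ => intro hD _; cases hD
  | muL hside h' ih' =>
      intro hD hm
      exact LE.muL hside (ih' hD hm)
  | muR hside h' ih' => intro hD _; cases hD

lemma LE_arrow_right_aux {n' : ℕ} {B₁ B₂ C₁ C₂ : Ty}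
    (hB : spec B₂ ≠ .always) (hC : spec C₂ ≠ .always)
    (ih₁ : ∀ {A' : Ty}, LE n' A' B₁ → LE n' A' C₁)
    (ih₂ : ∀ {A' : Ty}, LE n' A' B₂ → LE n' A' C₂) :
    ∀ {m : ℕ} {A D : Ty}, LE m A D → D = Ty.arrow B₁ B₂ → m = n' + 1 →
      LE (n'+1) A (Ty.arrow C₁ C₂) := by
  intro m A D h
  induction h with
  | zero => intro _ hm; cases hm
  | top hA hD =>
      intro hD' _
      rw [hD', spec_arrow] at hD
      exact absurd hD hB
  | bot hA hD => intro hD' _; rw [hD'] at hD; cases hD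
  | fvar j => intro hD _; cases hD
  | arrow hA hB' h₁ h₂ ih₁' ih₂' =>
      intro hD hm
      injection hD with hD1 hD2
      cases hD1
      cases hD2
      cases hm
      exact LE.arrow hA hC (ih₁ h₁) (ih₂ h₂)
  | box _ _ _ _ => intro hD _; cases hD
  | muL hside h' ih' =>
      intro hD hm
      exact LE.muL hside (ih' hD hm)
  | muR hside h' ih' => intro hD _; cases hD

theorem LE_trans : ∀ {n : ℕ} {A B C : Ty}, LE n A B → LE n B C → LE n A C := by
  intro n A B C h1 h2
  induction h2 generalizing A with
  | zero => exact LE.zero _ _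
  | top hB hC => exact LE_top_right h1 hB hC
  | bot hB hC => exact LE_bot_right h1 hB hC
  | fvar j => exact h1
  | box hB hC h ih =>
      exact LE_box_right_aux hB hC (fun h' => ih h') h1 rfl rfl
  | arrow hB hC hf ha ihf iha =>
      exact LE_arrow_right_aux hB hC (fun h' => ihf h') (fun h' => iha h') h1 rfl rfl
  | muL hside h ih =>
      exact ih (LE_unfoldR h1 rfl hside)
  | muR hside h ih =>
      exact LE.muR hside (ih h1)

/-! ### Shape inversions -/

lemma LE_always_transfer : ∀ {m : ℕ} {A B : Ty}, LE m A B → spec A = .always → 1 ≤ m →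
    spec B = .always := by
  intro m A B h
  induction h with
  | zero => intro _ hm; omega
  | top _ hB => intro _ _; exact hB
  | bot hA _ => intro hA' _; rw [spine_loop_spec _ hA] at hA'; cases hA'
  | fvar j => intro hA _; cases hA
  | box hA _ _ _ => intro hA' _; exact absurd (bumpS_always.mp hA') hA
  | arrow hA _ _ _ _ _ => intro hA' _; exact absurd hA' hA
  | muL hside _ _ => intro hA' _; exact absurd hA' hside
  | muR hside _ ih =>
      intro hA' hm
      exact absurd ((spec_unfold _).symm.trans (ih hA' hm)) hside

lemma LE_var_inv {j : ℕ} : ∀ {m : ℕ} {A B : Ty}, LE m A B → A = Ty.var j → 1 ≤ m →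
    (∀ X, B ≠ Ty.mu X) → B = Ty.var j := by
  intro m A B h
  induction h with
  | zero => intro _ hm; omega
  | top hA _ => intro hA' _ _; rw [hA', spec_var] at hA; cases hA
  | bot hA _ => intro hA' _ _; rw [hA'] at hA; cases hA
  | fvar j' => intro hA _ _; injection hA with h; rw [h]
  | box _ _ _ _ => intro hA _ _; cases hA
  | arrow _ _ _ _ _ _ => intro hA _ _; cases hA
  | muL _ _ _ => intro hA _ _; cases hA
  | muR hside h ih => intro hA hm hB; exact absurd rfl (hB _)

lemma LE_box_shape {A₁ : Ty} : ∀ {m : ℕ} {A B : Ty}, LE m A B → A = Ty.box A₁ → 1 ≤ m →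
    spec A₁ ≠ .always → (∀ X, B ≠ Ty.mu X) → ∃ B₁, B = Ty.box B₁ := by
  intro m A B h
  induction h with
  | zero => intro _ hm; omega
  | top hA _ =>
      intro hA' _ hA₁ _
      rw [hA', spec_box] at hA
      exact absurd (bumpS_always.mp hA) hA₁
  | bot hA _ => intro hA' _ _ _; rw [hA'] at hA; cases hA
  | fvar j => intro hA _ _ _; cases hA
  | box _ _ _ _ => intro hA _ _ _; exact ⟨_, rfl⟩
  | arrow _ _ _ _ _ _ => intro hA _ _ _; cases hA
  | muL _ _ _ => intro hA _ _ _; cases hA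
  | muR _ _ _ => intro _ _ _ hB; exact absurd rfl (hB _)

lemma LE_box_box {n : ℕ} {A₁ B₁ : Ty} : ∀ {m : ℕ} {A B : Ty}, LE m A B → A = Ty.box A₁ →
    B = Ty.box B₁ → m = n + 1 → spec A₁ ≠ .always → LE n A₁ B₁ := by
  intro m A B h
  induction h with
  | zero => intro _ _ hm; cases hm
  | top hA _ =>
      intro hA' _ _ hA₁
      rw [hA', spec_box] at hA
      exact absurd (bumpS_always.mp hA) hA₁
  | bot hA _ => intro hA' _ _ _; rw [hA'] at hA; cases hA
  | fvar j => intro hA _ _ _; cases hA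
  | box _ _ h' _ =>
      intro hA hB hm _
      injection hA with hA1
      injection hB with hB1
      cases hA1; cases hB1; cases hm
      exact h'
  | arrow _ _ _ _ _ _ => intro hA _ _ _; cases hA
  | muL _ _ _ => intro hA _ _ _; cases hA
  | muR _ _ _ => intro _ hB _ _; cases hB

lemma LE_arrow_shape {A₁ A₂ : Ty} : ∀ {m : ℕ} {A B : Ty}, LE m A B → A = Ty.arrow A₁ A₂ →
    1 ≤ m → spec A₂ ≠ .always → (∀ X, B ≠ Ty.mu X) → ∃ B₁ B₂, B = Ty.arrow B₁ B₂ := by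
  intro m A B h
  induction h with
  | zero => intro _ hm; omega
  | top hA _ =>
      intro hA' _ hA₂ _
      rw [hA', spec_arrow] at hA
      exact absurd hA hA₂
  | bot hA _ => intro hA' _ _ _; rw [hA'] at hA; cases hA
  | fvar j => intro hA _ _ _; cases hA
  | box _ _ _ _ => intro hA _ _ _; cases hA
  | arrow _ _ _ _ _ _ => intro hA _ _ _; exact ⟨_, _, rfl⟩
  | muL _ _ _ => intro hA _ _ _; cases hA
  | muR _ _ _ => intro _ _ _ hB; exact absurd rfl (hB _)

lemma LE_arrow_arrow {n : ℕ} {A₁ A₂ B₁ B₂ : Ty} : ∀ {m : ℕ} {A B : Ty}, LE m A B →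
    A = Ty.arrow A₁ A₂ → B = Ty.arrow B₁ B₂ → m = n + 1 → spec A₂ ≠ .always →
    LE n A₁ B₁ ∧ LE n A₂ B₂ := by
  intro m A B h
  induction h with
  | zero => intro _ _ hm; cases hm
  | top hA _ =>
      intro hA' _ _ hA₂
      rw [hA', spec_arrow] at hA
      exact absurd hA hA₂
  | bot hA _ => intro hA' _ _ _; rw [hA'] at hA; cases hA
  | fvar j => intro hA _ _ _; cases hA
  | box _ _ _ _ => intro hA _ _ _; cases hA
  | arrow _ _ h₁ h₂ _ _ =>
      intro hA hB hm _
      injection hA with hA1 hA2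
      injection hB with hB1 hB2
      cases hA1; cases hA2; cases hB1; cases hB2; cases hm
      exact ⟨h₁, h₂⟩
  | muL _ _ _ => intro hA _ _ _; cases hA
  | muR _ _ _ => intro _ hB _ _; cases hB

/-! ### The invariant preserved by type equivalence -/

def REq (A B : Ty) : Prop :=
  spec A = spec B ∧ (spec A ≠ .always → tb A = tb B) ∧ (∀ n, LE n A B) ∧ (∀ n, LE n B A)

lemma req_refl (A : Ty) : REq A A :=
  ⟨rfl, fun _ => rfl, fun n => LE_refl n A, fun n => LE_refl n A⟩

lemma req_symm {A B : Ty} (h : REq A B) : REq B A := by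
  obtain ⟨h1, h2, h3, h4⟩ := h
  exact ⟨h1.symm, fun hB => (h2 (by rw [h1]; exact hB)).symm, h4, h3⟩

lemma req_trans {A B C : Ty} (hAB : REq A B) (hBC : REq B C) : REq A C := by
  obtain ⟨h1, h2, h3, h4⟩ := hAB
  obtain ⟨g1, g2, g3, g4⟩ := hBC
  exact ⟨h1.trans g1, fun hA => (h2 hA).trans (g2 (by rw [← h1]; exact hA)),
    fun n => LE_trans (h3 n) (g3 n), fun n => LE_trans (g4 n) (h4 n)⟩

lemma req_box {A B : Ty} (h : REq A B) : REq (Ty.box A) (Ty.box B) := by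
  obtain ⟨h1, h2, h3, h4⟩ := h
  refine ⟨by rw [spec_box, spec_box, h1], ?_, ?_, ?_⟩
  · intro hbox
    have hA : spec A ≠ .always := fun hh => hbox (by rw [spec_box, hh]; rfl)
    show tb A + 1 = tb B + 1
    rw [h2 hA]
  · intro n
    cases n with
    | zero => exact LE.zero _ _
    | succ n' =>
        by_cases hA : spec A = .always
        · exact LE.top (by rw [spec_box, hA]; rfl) (by rw [spec_box, ← h1, hA]; rfl)
        · exact LE.box hA (fun hh => hA (by rw [h1]; exact hh)) (h3 n')
  · intro n
    cases n with
    | zero => exact LE.zero _ _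
    | succ n' =>
        by_cases hA : spec A = .always
        · exact LE.top (by rw [spec_box, ← h1, hA]; rfl) (by rw [spec_box, hA]; rfl)
        · exact LE.box (fun hh => hA (by rw [h1]; exact hh)) hA (h4 n')

lemma req_arrow {A B C D : Ty} (hAC : REq A C) (hBD : REq B D) :
    REq (Ty.arrow A B) (Ty.arrow C D) := by
  obtain ⟨h1, h2, h3, h4⟩ := hAC
  obtain ⟨g1, g2, g3, g4⟩ := hBD
  refine ⟨by rw [spec_arrow, spec_arrow, g1], ?_, ?_, ?_⟩
  · intro harr
    have hB : spec B ≠ .always := fun hh => harr (by rw [spec_arrow]; exact hh)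
    show tb B = tb D
    exact g2 hB
  · intro n
    cases n with
    | zero => exact LE.zero _ _
    | succ n' =>
        by_cases hB : spec B = .always
        · exact LE.top (by rw [spec_arrow]; exact hB) (by rw [spec_arrow, ← g1]; exact hB)
        · exact LE.arrow hB (fun hh => hB (by rw [g1]; exact hh)) (h3 n') (g3 n')
  · intro n
    cases n with
    | zero => exact LE.zero _ _
    | succ n' =>
        by_cases hB : spec B = .always
        · exact LE.top (by rw [spec_arrow, ← g1]; exact hB) (by rw [spec_arrow]; exact hB)
        · exact LE.arrow (fun hh => hB (by rw [g1]; exact hh)) hB (h4 n') (g4 n')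

lemma req_arrowTop (A : Ty) : REq (Ty.arrow A tyTop) tyTop := by
  have hs : spec (Ty.arrow A tyTop) = .always := by rw [spec_arrow]; exact spec_tyTop
  exact ⟨by rw [hs, spec_tyTop], fun h => absurd hs h,
    fun n => LE.top hs spec_tyTop, fun n => LE.top spec_tyTop hs⟩

lemma req_fix (A : Ty) : REq (Ty.mu A) (unfoldMu A) := by
  refine ⟨(spec_unfold A).symm, fun h => (tb_unfold h).symm, ?_, ?_⟩
  · intro n
    by_cases hTV : spec (Ty.mu A) = .always
    · exact LE.top hTV (by rw [spec_unfold]; exact hTV)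
    · exact LE.muL hTV (LE_refl n _)
  · intro n
    by_cases hTV : spec (Ty.mu A) = .always
    · exact LE.top (by rw [spec_unfold]; exact hTV) hTV
    · exact LE.muR hTV (LE_refl n _)

lemma openT_eq (C B : Ty) : openT C B =
    Ty.subst (fun k => match k with | 0 => B | Nat.succ j => Ty.var j) C := rfl

lemma uniq_main {A C : Ty} (hP : Proper C 0) (hTA : spec A ≠ .always)
    (hTC : spec (Ty.mu C) ≠ .always)
    (h3 : ∀ n, LE n A (openT C A)) (h4 : ∀ n, LE n (openT C A) A) :
    ∀ n, LE n A (Ty.mu C) ∧ LE n (Ty.mu C) A := by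
  intro n
  induction n using Nat.strong_induction_on with
  | h n IHn =>
  have hVz : ∀ j, spine C = SpineRes.fvar j → j ≠ 0 := by
    intro j hj h0
    subst h0
    exact (proper_iff_not_ung C 0).mp hP (spec_free_ung C 0 (spine_fvar_spec C 0 hj))
  constructor
  · refine LE.muR hTC ?_
    rw [unfoldMu_eq]
    refine LE_trans (h3 n) (SML n C _ _ ?_ ?_ ?_)
    · intro j hj
      cases j with
      | zero => exact absurd rfl (hVz 0 hj)
      | succ m => exact LE.fvar m
    · intro j k hk
      cases j with
      | zero => exact (IHn k hk).1
      | succ m => exact LE.fvar m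
    · intro j
      cases j with
      | zero => exact iff_of_false hTA hTC
      | succ m => exact Iff.rfl
  · refine LE.muL hTC ?_
    rw [unfoldMu_eq]
    refine LE_trans (SML n C _ _ ?_ ?_ ?_) (h4 n)
    · intro j hj
      cases j with
      | zero => exact absurd rfl (hVz 0 hj)
      | succ m => exact LE.fvar m
    · intro j k hk
      cases j with
      | zero => exact (IHn k hk).2
      | succ m => exact LE.fvar m
    · intro j
      cases j with
      | zero => exact iff_of_false hTC hTA
      | succ m => exact Iff.rfl

lemma req_uniq {A C : Ty} (h : REq A (openT C A)) (hP : Proper C 0) : REq A (Ty.mu C) := by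
  obtain ⟨h1, h2, h3, h4⟩ := h
  rw [openT_eq, spec_subst] at h1
  rcases hsC : spec C with _ | _ | ⟨j, b⟩
  · -- spec C = always
    rw [hsC] at h1
    simp only [substS] at h1
    have hmu : spec (Ty.mu C) = .always := by rw [spec_mu, hsC]; rfl
    exact ⟨by rw [h1, hmu], fun hh => absurd h1 hh,
      fun n => LE.top h1 hmu, fun n => LE.top hmu h1⟩
  · -- spec C = never
    rw [hsC] at h1
    simp only [substS] at h1
    have hmu : spec (Ty.mu C) = .never := by rw [spec_mu, hsC]; rfl
    have hTA : spec A ≠ .always := by rw [h1]; intro hh; cases hh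
    have hTC : spec (Ty.mu C) ≠ .always := by rw [hmu]; intro hh; cases hh
    have htbC : tb (Ty.mu C) = tb C := tb_mu_other (fun b hb => by rw [hsC] at hb; cases hb)
    have main := uniq_main hP hTA hTC h3 h4
    refine ⟨by rw [h1, hmu], ?_, fun n => (main n).1, fun n => (main n).2⟩
    intro _
    rw [htbC, h2 hTA, openT_eq, tb_subst_never C _ hsC]
  · -- spec C = free j b
    cases j with
    | zero =>
        cases b
        · -- free 0 false : contradicts properness
          exact absurd (spec_free_ung C 0 hsC) ((proper_iff_not_ung C 0).mp hP)
        · -- free 0 true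
          rw [hsC] at h1
          simp only [substS] at h1
          -- h1 : spec A = combineS true (spec A)
          have hmu : spec (Ty.mu C) = .always := by rw [spec_mu, hsC]; rfl
          have hA : spec A = .always := by
            rcases hA' : spec A with _ | _ | ⟨j', b'⟩
            · rfl
            · exfalso
              have e1 : tb A = tb (openT C A) := h2 (by rw [hA']; intro hh; cases hh)
              have e2 : tb (openT C A) = tb C + tb A := by
                rw [openT_eq]
                exact tb_subst_free C _ 0 true hsC
              have := tb_pos_of_bullet C 0 hsC
              omega
            · exfalso
              have e1 : tb A = tb (openT C A) := h2 (by rw [hA']; intro hh; cases hh)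
              have e2 : tb (openT C A) = tb C + tb A := by
                rw [openT_eq]
                exact tb_subst_free C _ 0 true hsC
              have := tb_pos_of_bullet C 0 hsC
              omega
          exact ⟨by rw [hA, hmu], fun hh => absurd hA hh,
            fun n => LE.top hA hmu, fun n => LE.top hmu hA⟩
    | succ m =>
        rw [hsC] at h1
        simp only [substS] at h1
        have hvar : spec (Ty.var m) = .free m false := rfl
        rw [hvar] at h1
        have h1' : spec A = .free m b := by
          rw [h1]
          cases b <;> rfl
        have hmu : spec (Ty.mu C) = .free m b := by rw [spec_mu, hsC]; cases b <;> rfl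
        have hTA : spec A ≠ .always := by rw [h1']; intro hh; cases hh
        have hTC : spec (Ty.mu C) ≠ .always := by rw [hmu]; intro hh; cases hh
        have main := uniq_main hP hTA hTC h3 h4
        refine ⟨by rw [h1', hmu], ?_, fun n => (main n).1, fun n => (main n).2⟩
        intro _
        have htbC : tb (Ty.mu C) = tb C := tb_mu_other (fun b' hb => by rw [hsC] at hb; cases hb)
        have e2 : tb (openT C A) = tb C + tb (Ty.var m) := by
          rw [openT_eq]
          exact tb_subst_free C _ (m+1) b hsC
        rw [htbC, h2 hTA, e2]
        rfl

theorem tyEq_req : ∀ {s : Bool} {A B : Ty}, TyEq s A B → s = false → REq A B := by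
  intro s A B h
  induction h with
  | refl s A => intro _; exact req_refl A
  | symm h ih => intro hs; exact req_symm (ih hs)
  | trans h1 h2 ih1 ih2 => intro hs; exact req_trans (ih1 hs) (ih2 hs)
  | boxCongr h ih => intro hs; exact req_box (ih hs)
  | arrowCongr h1 h2 ih1 ih2 => intro hs; exact req_arrow (ih1 hs) (ih2 hs)
  | arrowTop s A => intro _; exact req_arrowTop A
  | fix s A => intro _; exact req_fix A
  | uniq h hP ih => intro hs; exact req_uniq (ih hs) hP
  | kl A B => intro hs; cases hs

/-! ### Extraction: equal interpretations from the simulation -/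

theorem ext_main {W : Type*} {acc : W → W → Prop} (hwf : ConverselyWF acc)
    {V : Type*} {ap : V → V → V} (Int : Interp W acc V ap) :
    ∀ p : W, ∀ N : ℕ, ∀ A B : Ty, gd A + gd B ≤ N → WF A → WF B →
      (∀ n, LE n A B) → (∀ n, LE n B A) → ∀ η, Int.I A η p = Int.I B η p := by
  have hwfT : WellFounded (Relation.TransGen (fun q p => acc p q)) :=
    WellFounded.transGen hwf
  intro p
  refine hwfT.induction
    (C := fun p => ∀ N A B, gd A + gd B ≤ N → WF A → WF B →
      (∀ n, LE n A B) → (∀ n, LE n B A) → ∀ η, Int.I A η p = Int.I B η p) p ?_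
  clear p
  intro p IHp N
  induction N using Nat.strong_induction_on with
  | h N IHN =>
  intro A B hN hWA hWB h1 h2 η
  by_cases hTA : spec A = .always
  · have hTB : spec B = .always := LE_always_transfer (h1 1) hTA (le_refl 1)
    rw [Int.I_tv A η p hWA ((isTV_iff_spec A).mpr hTA),
        Int.I_tv B η p hWB ((isTV_iff_spec B).mpr hTB)]
  · have hTB : spec B ≠ .always := fun hh => hTA (LE_always_transfer (h2 1) hh (le_refl 1))
    cases A with
    | mu A₁ =>
        have hlt : gd (unfoldMu A₁) + gd B < N := by
          have := gd_unfold_lt hWA.2 hTA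
          omega
        rw [Int.I_mu A₁ η p hWA (fun hh => hTA ((isTV_iff_spec _).mp hh))]
        exact IHN _ hlt (unfoldMu A₁) B le_rfl (wf_unfold hWA) hWB
          (fun n => LE_unfoldL (h1 n) rfl hTA) (fun n => LE_unfoldR (h2 n) rfl hTA) η
    | var j =>
        cases B with
        | mu B₁ =>
            have hlt : gd (Ty.var j) + gd (unfoldMu B₁) < N := by
              have := gd_unfold_lt hWB.2 hTB
              omega
            rw [Int.I_mu B₁ η p hWB (fun hh => hTB ((isTV_iff_spec _).mp hh))]
            exact IHN _ hlt (Ty.var j) (unfoldMu B₁) le_rfl hWA (wf_unfold hWB)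
              (fun n => LE_unfoldR (h1 n) rfl hTB) (fun n => LE_unfoldL (h2 n) rfl hTB) η
        | var j' =>
            have hinv := LE_var_inv (h1 1) rfl (le_refl 1) (fun X hh => by cases hh)
            injection hinv with hj
            rw [hj]
        | box B₁ =>
            have hinv := LE_var_inv (h1 1) rfl (le_refl 1) (fun X hh => by cases hh)
            exact Ty.noConfusion hinv
        | arrow B₁ B₂ =>
            have hinv := LE_var_inv (h1 1) rfl (le_refl 1) (fun X hh => by cases hh)
            exact Ty.noConfusion hinv
    | box A₁ =>
        have hA₁ : spec A₁ ≠ .always := fun hh => hTA (by rw [spec_box, hh]; rfl)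
        cases B with
        | mu B₁ =>
            have hlt : gd (Ty.box A₁) + gd (unfoldMu B₁) < N := by
              have := gd_unfold_lt hWB.2 hTB
              omega
            rw [Int.I_mu B₁ η p hWB (fun hh => hTB ((isTV_iff_spec _).mp hh))]
            exact IHN _ hlt (Ty.box A₁) (unfoldMu B₁) le_rfl hWA (wf_unfold hWB)
              (fun n => LE_unfoldR (h1 n) rfl hTB) (fun n => LE_unfoldL (h2 n) rfl hTB) η
        | var j' =>
            obtain ⟨X, hX⟩ := LE_box_shape (h1 1) rfl (le_refl 1) hA₁ (fun X hh => by cases hh)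
            exact Ty.noConfusion hX
        | arrow B₁ B₂ =>
            obtain ⟨X, hX⟩ := LE_box_shape (h1 1) rfl (le_refl 1) hA₁ (fun X hh => by cases hh)
            exact Ty.noConfusion hX
        | box B₁ =>
            have hB₁ : spec B₁ ≠ .always := fun hh => hTB (by rw [spec_box, hh]; rfl)
            have hcomp1 : ∀ n, LE n A₁ B₁ := fun n => LE_box_box (h1 (n+1)) rfl rfl rfl hA₁
            have hcomp2 : ∀ n, LE n B₁ A₁ := fun n => LE_box_box (h2 (n+1)) rfl rfl rfl hB₁
            have heq : ∀ q, acc p q → Int.I A₁ η q = Int.I B₁ η q := fun q hq =>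
              IHp q (Relation.TransGen.single hq) (gd A₁ + gd B₁) A₁ B₁ le_rfl hWA hWB
                hcomp1 hcomp2 η
            rw [Int.I_box A₁ η p hWA (fun hh => hTA ((isTV_iff_spec _).mp hh)),
                Int.I_box B₁ η p hWB (fun hh => hTB ((isTV_iff_spec _).mp hh))]
            ext u
            simp only [Set.mem_setOf_eq]
            exact forall_congr' fun q => forall_congr' fun hq => by rw [heq q hq]
    | arrow A₁ A₂ =>
        have hA₂ : spec A₂ ≠ .always := fun hh => hTA (by rw [spec_arrow]; exact hh)
        cases B with
        | mu B₁ =>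
            have hlt : gd (Ty.arrow A₁ A₂) + gd (unfoldMu B₁) < N := by
              have := gd_unfold_lt hWB.2 hTB
              omega
            rw [Int.I_mu B₁ η p hWB (fun hh => hTB ((isTV_iff_spec _).mp hh))]
            exact IHN _ hlt (Ty.arrow A₁ A₂) (unfoldMu B₁) le_rfl hWA (wf_unfold hWB)
              (fun n => LE_unfoldR (h1 n) rfl hTB) (fun n => LE_unfoldL (h2 n) rfl hTB) η
        | var j' =>
            obtain ⟨X, Y, hX⟩ := LE_arrow_shape (h1 1) rfl (le_refl 1) hA₂ (fun X hh => by cases hh)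
            exact Ty.noConfusion hX
        | box B₁ =>
            obtain ⟨X, Y, hX⟩ := LE_arrow_shape (h1 1) rfl (le_refl 1) hA₂ (fun X hh => by cases hh)
            exact Ty.noConfusion hX
        | arrow B₁ B₂ =>
            have hB₂ : spec B₂ ≠ .always := fun hh => hTB (by rw [spec_arrow]; exact hh)
            have hcomp1 : ∀ n, LE n A₁ B₁ ∧ LE n A₂ B₂ := fun n =>
              LE_arrow_arrow (h1 (n+1)) rfl rfl rfl hA₂
            have hcomp2 : ∀ n, LE n B₁ A₁ ∧ LE n B₂ A₂ := fun n =>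
              LE_arrow_arrow (h2 (n+1)) rfl rfl rfl hB₂
            have hgd : gd A₁ + gd B₁ < N ∧ gd A₂ + gd B₂ < N := by
              rw [gd_arrow, if_neg hA₂, gd_arrow, if_neg hB₂] at hN
              constructor <;> omega
            have heq : ∀ q, Relation.ReflTransGen acc p q →
                Int.I A₁ η q = Int.I B₁ η q ∧ Int.I A₂ η q = Int.I B₂ η q := by
              intro q hq
              rcases hq.cases_head with heq' | ⟨c, hc, hcb⟩
              · cases heq'
                exact ⟨IHN _ hgd.1 A₁ B₁ le_rfl hWA.1 hWB.1 (fun n => (hcomp1 n).1)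
                    (fun n => (hcomp2 n).1) η,
                  IHN _ hgd.2 A₂ B₂ le_rfl hWA.2 hWB.2 (fun n => (hcomp1 n).2)
                    (fun n => (hcomp2 n).2) η⟩
              · have htg : Relation.TransGen (fun q p => acc p q) q p := by
                  rw [show (fun q p => acc p q) = Function.swap acc from rfl]
                  exact Relation.transGen_swap.mpr (Relation.TransGen.head' hc hcb)
                exact ⟨IHp q htg (gd A₁ + gd B₁) A₁ B₁ le_rfl hWA.1 hWB.1
                    (fun n => (hcomp1 n).1) (fun n => (hcomp2 n).1) η,
                  IHp q htg (gd A₂ + gd B₂) A₂ B₂ le_rfl hWA.2 hWB.2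
                    (fun n => (hcomp1 n).2) (fun n => (hcomp2 n).2) η⟩
            rw [Int.I_arrow A₁ A₂ η p hWA.1 hWA.2 (fun hh => hTA ((isTV_iff_spec _).mp hh)),
                Int.I_arrow B₁ B₂ η p hWB.1 hWB.2 (fun hh => hTB ((isTV_iff_spec _).mp hh))]
            ext u
            simp only [Set.mem_setOf_eq]
            refine forall_congr' fun q => forall_congr' fun hq => ?_
            rw [(heq q hq).1, (heq q hq).2]

/-- **Soundness of ≅** with respect to well-founded frames. -/
theorem statement3
    (W : Type*) (hW : Nonempty W) (acc : W → W → Prop) (hwf : ConverselyWF acc)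
    (V : Type*) (alg : LambdaAlgebra V) (Int : Interp W acc V alg.ap)
    (A B : Ty) (hA : WF A) (hB : WF B) (hAB : TyEq false A B)
    (η : ℕ → W → Set V) (hη : Hereditary acc η) (p : W) :
    Int.I A η p = Int.I B η p := by
  have hreq := tyEq_req hAB rfl
  exact ext_main hwf Int p (gd A + gd B) A B le_rfl hA hB hreq.2.2.1 hreq.2.2.2 η

end LambdaA
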